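/- arXiv:2012.15372 — 5 statements merged into one kernel-verified Lean document; each statement's English description precedes it below -/
import Mathlib

section
/- Let (X, T) be a compact metric dynamical system with no fixed point. Then there exist a natural number N, a real δ > 0, and a continuous map F : X → ([0,1]^N)^ℤ satisfying F ∘ T = σ ∘ F (where σ is the shift) such that for every x ∈ X and every n ∈ ℤ, the n-th and (n+1)-st coordinates of F(x) are at Euclidean distance at least δ. -/
private lemma coord_le_norm {N : ℕ} (x : EuclideanSpace ℝ (Fin N)) (i : Fin N) :
    |x i| ≤ ‖x‖ := by
  rw [EuclideanSpace.norm_eq]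
  calc |x i| = Real.sqrt (‖x i‖ ^ 2) := by
        rw [Real.norm_eq_abs, sq_abs, Real.sqrt_sq_eq_abs]
    _ ≤ _ := Real.sqrt_le_sqrt
        (Finset.single_le_sum (fun j _ => sq_nonneg ‖x j‖) (Finset.mem_univ i))

/-- **Universality of 𝒳(N,δ).** Every fixed-point free compact metric dynamical system
admits an equivariant continuous map into some 𝒳(N,δ) ⊂ ([0,1]^N)^ℤ, i.e. a continuous
`F` with `F ∘ T = shift ∘ F` whose values are sequences in the cube with consecutive
terms at distance at least δ. -/
theorem universality_of_XNdelta (X : Type*) [MetricSpace X] [CompactSpace X]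
    (T : X ≃ₜ X) (hfree : ∀ x : X, T x ≠ x) :
    ∃ (N : ℕ) (δ : ℝ) (F : X → (ℤ → EuclideanSpace ℝ (Fin N))), 0 < δ ∧
      Continuous F ∧
      (∀ (x : X) (n : ℤ) (i : Fin N), F x n i ∈ Set.Icc (0:ℝ) 1) ∧
      (∀ x : X, F (T x) = fun n => F x (n + 1)) ∧
      (∀ (x : X) (n : ℤ), δ ≤ ‖F x n - F x (n + 1)‖) := by
  by_cases hne : Nonempty X
  case neg =>
    refine ⟨1, 1, fun x => (fun _ => 0), one_pos, ?_, ?_, ?_, ?_⟩ <;>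
      first
        | exact continuous_const
        | (intro x; exact absurd ⟨x⟩ hne)
  -- X nonempty
  -- the displacement function has a positive minimum ε
  have hd : Continuous fun x : X => dist x (T x) :=
    (continuous_id.dist T.continuous)
  obtain ⟨x₀, -, hx₀⟩ := isCompact_univ.exists_isMinOn Set.univ_nonempty
    hd.continuousOn
  set ε : ℝ := dist x₀ (T x₀) with hε
  have hεpos : 0 < ε := by
    rw [hε, dist_pos]; exact fun h => hfree x₀ h.symm
  have hεle : ∀ y : X, ε ≤ dist y (T y) := fun y => hx₀ (Set.mem_univ y)
  -- finite cover by balls of radius ε/8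
  obtain ⟨s, hs⟩ := isCompact_univ.elim_finite_subcover
    (fun c : X => Metric.ball c (ε / 8)) (fun c => Metric.isOpen_ball)
    (fun y _ => Set.mem_iUnion.mpr ⟨y, Metric.mem_ball_self (by positivity)⟩)
  set N := s.card with hN
  obtain ⟨e⟩ : Nonempty (Fin N ≃ {c // c ∈ s}) := ⟨(Fintype.equivFinOfCardEq (by simp [hN])).symm⟩
  set p : Fin N → X := fun i => (e i : X) with hp
  have hcover : ∀ y : X, ∃ i : Fin N, dist y (p i) < ε / 8 := by
    intro y
    have := hs (Set.mem_univ y)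
    simp only [Set.mem_iUnion] at this
    obtain ⟨c, hc, hyc⟩ := this
    exact ⟨e.symm ⟨c, hc⟩, by simpa [hp] using Metric.mem_ball.mp hyc⟩
  -- the bump functions
  set g : X → Fin N → ℝ := fun y i => max 0 (min 1 (2 - 8 * dist y (p i) / ε)) with hg
  have hgcont : Continuous g := by
    apply continuous_pi
    intro i
    exact continuous_const.max (continuous_const.min (by fun_prop))
  have hg01 : ∀ y i, g y i ∈ Set.Icc (0:ℝ) 1 :=
    fun y i => ⟨le_max_left _ _, max_le zero_le_one (min_le_left _ _)⟩
  have hgone : ∀ y i, dist y (p i) < ε / 8 → g y i = 1 := by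
    intro y i h
    have h2 : (1:ℝ) ≤ 2 - 8 * dist y (p i) / ε := by
      have h8 : 8 * dist y (p i) < ε := by linarith
      have := (div_lt_one hεpos).mpr h8
      linarith
    simp [hg, min_eq_left h2, max_eq_right, zero_le_one]
  have hgzero : ∀ y i, ε / 4 ≤ dist y (p i) → g y i = 0 := by
    intro y i h
    have h2 : 2 - 8 * dist y (p i) / ε ≤ 0 := by
      have : (2:ℝ) ≤ 8 * dist y (p i) / ε := (le_div_iff₀ hεpos).mpr (by linarith)
      linarith
    have : min 1 (2 - 8 * dist y (p i) / ε) ≤ 0 := le_trans (min_le_right _ _) h2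
    simp [hg, max_eq_left this]
  set f : X → EuclideanSpace ℝ (Fin N) := fun y => (WithLp.equiv 2 _).symm (g y) with hf
  have hfcont : Continuous f := (PiLp.continuous_toLp 2 _).comp hgcont
  have hfapp : ∀ y i, f y i = g y i := fun y i => rfl
  have hkey : ∀ y : X, (1:ℝ) ≤ ‖f y - f (T y)‖ := by
    intro y
    obtain ⟨i, hi⟩ := hcover y
    have h1 : f y i = 1 := hgone y i hi
    have h0 : f (T y) i = 0 := by
      apply hgzero
      have h1' := hεle y
      have htri := dist_triangle y (p i) (T y)
      have hc1 : dist y (p i) = dist (p i) y := dist_comm _ _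
      have hc2 : dist (p i) (T y) = dist (T y) (p i) := dist_comm _ _
      linarith
    calc (1:ℝ) = |(f y - f (T y)) i| := by
          simp [PiLp.sub_apply, h1, h0]
      _ ≤ _ := coord_le_norm _ i
  -- iterate
  set e2 : Equiv.Perm X := T.toEquiv with he2
  have hiter : ∀ n : ℤ, Continuous fun x : X => (e2 ^ n) x := by
    intro n
    induction n using Int.induction_on with
    | zero => simpa using continuous_id'
    | succ n ih =>
        have : ∀ x, (e2 ^ ((n:ℤ) + 1)) x = (e2 ^ (n:ℤ)) (e2 x) := by
          intro x; rw [zpow_add_one]; rfl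
        simp only [this]
        exact ih.comp T.continuous
    | pred n ih =>
        have : ∀ x, (e2 ^ (-(n:ℤ) - 1)) x = (e2 ^ (-(n:ℤ))) (e2⁻¹ x) := by
          intro x; rw [zpow_sub_one]; rfl
        simp only [this]
        exact ih.comp T.symm.continuous
  refine ⟨N, 1, fun x n => f ((e2 ^ n) x), one_pos, ?_, ?_, ?_, ?_⟩
  · exact continuous_pi fun n => hfcont.comp (hiter n)
  · intro x n i; exact hg01 _ i
  · intro x
    funext n
    have h : (e2 ^ n) (T x) = (e2 ^ (n + 1)) x := by
      rw [zpow_add_one]; rfl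
    show f ((e2 ^ n) (T x)) = f ((e2 ^ (n + 1)) x)
    rw [h]
  · intro x n
    have h : (e2 ^ (n + 1)) x = T ((e2 ^ n) x) := by
      rw [add_comm, zpow_add]; simp; rfl
    show (1:ℝ) ≤ ‖f ((e2 ^ n) x) - f ((e2 ^ (n + 1)) x)‖
    rw [h]
    exact hkey _
end

section
/- For every fixed-point free compact dynamical system (X, T) there exist N ∈ ℕ and δ > 0 such that for every prime p, coind_p P_p(𝒳(N, δ)) ≥ coind_p P_p(X) + 1, where 𝒳(N, δ) = {(x_n) ∈ ([0,1]^N)^ℤ : |x_n − x_{n+1}| ≥ δ ∀n} with the shift. -/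
open Function

/-- The standard model of `E_nℤ_p`, the join of `n+1` copies of the discrete space
`ℤ_p`: formal convex combinations `t₀g₀ ⊕ ⋯ ⊕ t_ng_n` of points of `ℤ_p`, realized
inside `ℝ^{Fin (n+1) × ZMod p}`. -/
def EnSpace (p n : ℕ) : Set (Fin (n+1) × ZMod p → ℝ) :=
  {f | (∀ a, 0 ≤ f a) ∧ (∑ᶠ a, f a = 1) ∧
    ∀ (i : Fin (n+1)) (g h : ZMod p), 0 < f (i, g) → 0 < f (i, h) → g = h}

/-- The generator of the ℤ_p-action on (the ambient space of) `E_nℤ_p`. -/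
def enShift (p n : ℕ) (f : Fin (n+1) × ZMod p → ℝ) : Fin (n+1) × ZMod p → ℝ :=
  fun a => f (a.1, a.2 + 1)

/-- The ℤ_p-coindex of a ℤ_p-space `(X, T)`: the supremum (in `WithBot ℕ∞`, with `⊥`
playing the role of `-1`, attained exactly for the empty space) of all `n` such that
there is a ℤ_p-equivariant continuous map `E_nℤ_p → X`. -/
noncomputable def coind (p : ℕ) (X : Type*) [TopologicalSpace X] (T : X → X) :
    WithBot ℕ∞ :=
  sSup {k : WithBot ℕ∞ | ∃ (n : ℕ) (φ : EnSpace p n → X),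
    k = ((n : ℕ∞) : WithBot ℕ∞) ∧ Continuous φ ∧
    ∀ e e' : EnSpace p n,
      (e' : Fin (n+1) × ZMod p → ℝ) = enShift p n (e : Fin (n+1) × ZMod p → ℝ) →
      φ e' = T (φ e)}

/-- The set of `p`-periodic points of `T`. -/
def perSet {X : Type*} (T : X → X) (p : ℕ) : Set X := {x | T^[p] x = x}

/-- The restriction of `T` to its set of `p`-periodic points. -/
def perMap {X : Type*} (T : X → X) (p : ℕ) : perSet T p → perSet T p :=
  fun x => ⟨T x.1, by
    have h : T^[p] x.1 = x.1 := x.2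
    show T^[p] (T x.1) = T x.1
    rw [← Function.iterate_succ_apply, Function.iterate_succ_apply', h]⟩

/-- The subshift `𝒳_m(N, δ) ⊂ ([0,1]^N)^ℤ` of sequences in the cube with
`|x_n − x_{n+m}| ≥ δ` for all `n`; for `m = 1` this is `𝒳(N, δ)`. -/
def XSet (N : ℕ) (δ : ℝ) (m : ℕ) : Set (ℤ → EuclideanSpace ℝ (Fin N)) :=
  {x | (∀ (n : ℤ) (i : Fin N), x n i ∈ Set.Icc (0:ℝ) 1) ∧
    ∀ n : ℤ, δ ≤ ‖x n - x (n + (m : ℤ))‖}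

/-- The shift map on `𝒳_m(N, δ)`. -/
def XShift (N : ℕ) (δ : ℝ) (m : ℕ) : XSet N δ m → XSet N δ m :=
  fun x => ⟨fun n => x.1 (n + 1), by
    refine ⟨fun n i => x.2.1 (n + 1) i, fun n => ?_⟩
    have h := x.2.2 (n + 1)
    show δ ≤ ‖x.1 (n + 1) - x.1 (n + (m : ℤ) + 1)‖
    rwa [show n + (m : ℤ) + 1 = n + 1 + (m : ℤ) by ring]⟩

/-! ### Auxiliary lemmas -/

lemma zz_cast_le_cast {a b : ℕ} (h : a ≤ b) :
    (((a:ℕ∞)) : WithBot ℕ∞) ≤ ((b:ℕ∞) : WithBot ℕ∞) := by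
  exact_mod_cast h

lemma zz_top_le {x : WithBot ℕ∞} (h : ∀ m : ℕ, ((m:ℕ∞) : WithBot ℕ∞) ≤ x) :
    ((⊤:ℕ∞) : WithBot ℕ∞) ≤ x := by
  cases x with
  | bot => exact absurd (h 0) (by simp)
  | coe y =>
    rw [WithBot.coe_le_coe]
    by_contra hy
    push_neg at hy
    have hm : ((y.toNat : ℕ) : ℕ∞) = y := ENat.coe_toNat hy.ne
    have := h (y.toNat + 1)
    rw [WithBot.coe_le_coe, ← hm] at this
    have h2 : ((y.toNat : ℕ) : ℕ∞) + 1 ≤ ((y.toNat : ℕ) : ℕ∞) := by push_cast at this ⊢; exact this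
    exact lt_irrefl _ ((ENat.add_one_le_iff (ENat.coe_ne_top _)).mp h2)

lemma zz_sSup_step (S₁ S₂ : Set (WithBot ℕ∞))
    (h1 : ∀ k ∈ S₁, ∃ n : ℕ, k = ((n:ℕ∞) : WithBot ℕ∞))
    (h2 : ∀ n : ℕ, ((n:ℕ∞) : WithBot ℕ∞) ∈ S₁ → (((n+1:ℕ):ℕ∞) : WithBot ℕ∞) ∈ S₂) :
    sSup S₁ + 1 ≤ sSup S₂ := by
  rcases S₁.eq_empty_or_nonempty with hS | hS
  · simp [hS, sSup_empty, WithBot.bot_add]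
  set A : Set ℕ := {n : ℕ | ((n:ℕ∞) : WithBot ℕ∞) ∈ S₁} with hA
  have hAne : A.Nonempty := by
    obtain ⟨k, hk⟩ := hS
    obtain ⟨n, rfl⟩ := h1 k hk
    exact ⟨n, hk⟩
  by_cases hbdd : BddAbove A
  · have hmem := Nat.sSup_mem hAne hbdd
    set m := sSup A with hm
    have hsup : sSup S₁ ≤ ((m:ℕ∞) : WithBot ℕ∞) := by
      apply sSup_le
      intro k hk
      obtain ⟨n, rfl⟩ := h1 k hk
      exact zz_cast_le_cast (le_csSup hbdd hk)
    calc sSup S₁ + 1 ≤ ((m:ℕ∞) : WithBot ℕ∞) + 1 := add_le_add_left hsup 1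
      _ = (((m+1:ℕ):ℕ∞) : WithBot ℕ∞) := by push_cast; ring
      _ ≤ sSup S₂ := le_sSup (h2 m hmem)
  · have hq : ∀ q : ℕ, ((q:ℕ∞) : WithBot ℕ∞) ≤ sSup S₂ := by
      intro q
      rw [not_bddAbove_iff] at hbdd
      obtain ⟨n, hn, hqn⟩ := hbdd q
      calc ((q:ℕ∞) : WithBot ℕ∞) ≤ (((n+1:ℕ):ℕ∞) : WithBot ℕ∞) := zz_cast_le_cast (by omega)
        _ ≤ sSup S₂ := le_sSup (h2 n hn)
    calc sSup S₁ + 1 ≤ ((⊤:ℕ∞) : WithBot ℕ∞) := le_top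
      _ ≤ sSup S₂ := zz_top_le hq

lemma zz_abs_le_norm {N : ℕ} (v : EuclideanSpace ℝ (Fin N)) (j : Fin N) : |v j| ≤ ‖v‖ := by
  have h1 : |v j| = √((v j)^2) := (Real.sqrt_sq_eq_abs _).symm
  rw [EuclideanSpace.norm_eq, h1]
  apply Real.sqrt_le_sqrt
  have := Finset.single_le_sum (f := fun i => ‖v i‖^2) (fun i _ => sq_nonneg _) (Finset.mem_univ j)
  simpa using this

lemma zz_perm_zpow_cont {X : Type*} [TopologicalSpace X] (T : X ≃ₜ X) (k : ℤ) :
    Continuous fun x => (T.toEquiv ^ k) x := by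
  cases k with
  | ofNat m =>
    rw [Int.ofNat_eq_coe, zpow_natCast]
    simp only [Equiv.Perm.coe_pow]
    exact T.continuous.iterate m
  | negSucc m =>
    rw [zpow_negSucc, ← inv_pow]
    simp only [Equiv.Perm.coe_pow]
    have : ⇑(T.toEquiv⁻¹) = ⇑T.symm := rfl
    rw [this]
    exact T.symm.continuous.iterate (m+1)

lemma zz_xshift_iter {N : ℕ} {δ : ℝ} (m : ℕ) (Y : XSet N δ 1) (k : ℤ) :
    ((XShift N δ 1)^[m] Y).1 k = Y.1 (k + m) := by
  induction m generalizing Y k with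
  | zero => simp
  | succ m ih =>
    rw [Function.iterate_succ_apply]
    have h : (XShift N δ 1 Y).1 = fun n => Y.1 (n + 1) := rfl
    rw [ih, h]
    norm_num
    ring_nf

def zzColor (p : ℕ) (a : ZMod p) : ℕ :=
  if a.val + 1 = p ∧ p % 2 = 1 then 2 else a.val % 2

lemma zzColor_le (p : ℕ) (a : ZMod p) : zzColor p a ≤ 2 := by
  unfold zzColor; split_ifs <;> omega

lemma zzColor_ne (p : ℕ) (hp : 1 < p) (a : ZMod p) : zzColor p a ≠ zzColor p (a + 1) := by
  haveI : NeZero p := ⟨by omega⟩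
  haveI : Fact (1 < p) := ⟨hp⟩
  have hu : a.val < p := ZMod.val_lt a
  have hv : (a + 1).val = (a.val + 1) % p := by
    rw [ZMod.val_add, ZMod.val_one]
  unfold zzColor
  rw [hv]
  rcases Nat.lt_or_ge (a.val + 1) p with h | h
  · rw [Nat.mod_eq_of_lt h]
    split_ifs <;> omega
  · have hp1 : a.val + 1 = p := by omega
    rw [hp1, Nat.mod_self]
    split_ifs <;> omega

lemma zz_sep (X : Type*) [MetricSpace X] [CompactSpace X] [Nonempty X]
    (T : X → X) (hTc : Continuous T) (hT : ∀ x, T x ≠ x) :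
    ∃ (M : ℕ) (F : X → Fin M → ℝ),
      (∀ j, Continuous fun x => F x j) ∧
      (∀ x j, F x j ∈ Set.Icc (0:ℝ) 1) ∧
      (∀ x, ∃ j, F x j = 1 ∧ F (T x) j = 0) := by
  have hdc : Continuous fun x : X => dist x (T x) := continuous_id.dist hTc
  obtain ⟨x₀, -, hx₀⟩ := isCompact_univ.exists_isMinOn Set.univ_nonempty hdc.continuousOn
  set ε : ℝ := dist x₀ (T x₀) with hε
  have hεpos : 0 < ε := dist_pos.2 (fun h => hT x₀ h.symm)
  have hεle : ∀ x : X, ε ≤ dist x (T x) := fun x => hx₀ (Set.mem_univ x)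
  obtain ⟨t, ht⟩ := isCompact_univ.elim_finite_subcover
    (fun x : X => Metric.ball x (ε/8)) (fun x => Metric.isOpen_ball)
    (fun x _ => Set.mem_iUnion.2 ⟨x, Metric.mem_ball_self (by positivity)⟩)
  set M := t.card with hM
  set c : Fin M → X := fun j => (t.equivFin.symm j : X) with hc
  refine ⟨M, fun x j => max 0 (min 1 (2 - (8/ε) * dist x (c j))), ?_, ?_, ?_⟩
  · intro j
    exact (continuous_const.max (continuous_const.min (continuous_const.sub
      (continuous_const.mul (continuous_id.dist continuous_const)))))
  · intro x j
    constructor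
    · exact le_max_left _ _
    · exact max_le (by norm_num) (min_le_left _ _)
  · intro x
    have hx := ht (Set.mem_univ x)
    rw [Set.mem_iUnion₂] at hx
    obtain ⟨y, hyt, hxy⟩ := hx
    refine ⟨t.equivFin ⟨y, hyt⟩, ?_, ?_⟩
    · have hcy : c (t.equivFin ⟨y, hyt⟩) = y := by simp [hc]
      simp only []
      rw [hcy]
      have hd : dist x y < ε/8 := Metric.mem_ball.1 hxy
      have h1 : (1:ℝ) ≤ 2 - (8/ε) * dist x y := by
        have : (8/ε) * dist x y < 1 := by
          rw [div_mul_eq_mul_div, div_lt_one hεpos]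
          nlinarith
        linarith
      rw [min_eq_left h1, max_eq_right (by norm_num)]
    · have hcy : c (t.equivFin ⟨y, hyt⟩) = y := by simp [hc]
      simp only []
      rw [hcy]
      have hd : dist x y < ε/8 := Metric.mem_ball.1 hxy
      have hd2 : 7*ε/8 ≤ dist (T x) y := by
        have htri := dist_triangle x y (T x)
        have h3 := hεle x
        rw [dist_comm (T x) y]
        linarith [dist_comm x y ▸ htri]
      have h1 : min 1 (2 - (8/ε) * dist (T x) y) ≤ 0 := by
        refine le_trans (min_le_right _ _) ?_
        have : 7 ≤ (8/ε) * dist (T x) y := by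
          rw [div_mul_eq_mul_div, le_div_iff₀ hεpos]
          nlinarith
        linarith
      exact max_eq_left h1

/-- For every fixed-point free compact dynamical system `(X, T)` there are `N ∈ ℕ` and
`δ > 0` such that for every prime `p`,
`coind_p P_p(𝒳(N, δ)) ≥ coind_p P_p(X) + 1`. -/
theorem coind_XNdelta_ge (X : Type*) [TopologicalSpace X] [CompactSpace X]
    [TopologicalSpace.MetrizableSpace X] (T : X ≃ₜ X) (hT : ∀ x : X, T x ≠ x) :
    ∃ (N : ℕ) (δ : ℝ), 0 < δ ∧ ∀ p : ℕ, p.Prime →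
      coind p (perSet (⇑T) p) (perMap (⇑T) p) + 1
        ≤ coind p (perSet (XShift N δ 1) p) (perMap (XShift N δ 1) p) := by
  by_cases hne : Nonempty X
  case neg =>
    refine ⟨1, 1, one_pos, fun p hp => ?_⟩
    haveI : NeZero p := ⟨hp.ne_zero⟩
    unfold coind
    apply zz_sSup_step
    · rintro k ⟨n, φ, hk, -, -⟩
      exact ⟨n, hk⟩
    · rintro n ⟨n', φ, -, -, -⟩
      exfalso
      have e₀ : ↥(EnSpace p n') := ⟨fun b => if b = ((0 : Fin (n'+1)), (0 : ZMod p)) then 1 else 0, ?_⟩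
      · exact hne ⟨(φ e₀).1⟩
      · refine ⟨fun b => by positivity, ?_, ?_⟩
        · rw [finsum_eq_sum_of_fintype]
          simp
        · intro i g h hg hh
          have key : ∀ g' : ZMod p,
              0 < (if (i, g') = ((0 : Fin (n'+1)), (0 : ZMod p)) then (1:ℝ) else 0) → g' = 0 := by
            intro g' hg'
            by_contra hc
            rw [if_neg (by simp [hc])] at hg'
            exact lt_irrefl 0 hg'
          rw [key g hg, key h hh]
  case pos =>
    letI : MetricSpace X := TopologicalSpace.metrizableSpaceMetric X
    obtain ⟨M, F, hFc, hF01, hFsep⟩ := zz_sep X (⇑T) T.continuous hT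
    refine ⟨M + 1, 1/4, by norm_num, fun p hp => ?_⟩
    haveI : NeZero p := ⟨hp.ne_zero⟩
    have hp1 : 1 < p := hp.one_lt
    -- the ZMod p "coloring" function
    set g : ZMod p → ℝ := fun a => (zzColor p a : ℝ) / 2 with hgdef
    have hg01 : ∀ a, g a ∈ Set.Icc (0:ℝ) 1 := by
      intro a
      constructor
      · positivity
      · simp only [hgdef]
        rw [div_le_one (by norm_num)]
        exact_mod_cast le_trans (Nat.cast_le.2 (zzColor_le p a)) (by norm_num)
    have hgsep : ∀ a : ZMod p, 1/2 ≤ |g a - g (a+1)| := by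
      intro a
      have hne' := zzColor_ne p hp1 a
      have h1 : (1:ℝ) ≤ |(zzColor p a : ℝ) - (zzColor p (a+1) : ℝ)| := by
        have h0 : ((zzColor p a : ℤ) - (zzColor p (a+1) : ℤ)) ≠ 0 :=
          sub_ne_zero.2 (by exact_mod_cast hne')
        have h2 := Int.one_le_abs h0
        exact_mod_cast h2
      simp only [hgdef]
      rw [div_sub_div_same, abs_div, abs_of_nonneg (by norm_num : (0:ℝ) ≤ 2)]
      linarith
    unfold coind
    apply zz_sSup_step
    · rintro k ⟨n, φ, hk, -, -⟩
      exact ⟨n, hk⟩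
    · rintro n ⟨n', φ, hcast, hφc, hφe⟩
      have hnn : n = n' := by exact_mod_cast hcast
      subst hnn
      -- basic structure functions on EnSpace p (n+1)
      set σ : Equiv.Perm X := T.toEquiv with hσ
      set sf : ↥(EnSpace p (n+1)) → ℝ :=
        fun e => ∑ i : Fin (n+1), ∑ a : ZMod p, e.1 (i.castSucc, a) with hsf
      set rf : ↥(EnSpace p (n+1)) → ZMod p → ℝ :=
        fun e a => e.1 (Fin.last (n+1), a) with hrf
      have hnonneg : ∀ (e : ↥(EnSpace p (n+1))) b, 0 ≤ e.1 b := fun e => e.2.1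
      have hsum : ∀ e : ↥(EnSpace p (n+1)), sf e + ∑ a : ZMod p, rf e a = 1 := by
        intro e
        have h := e.2.2.1
        rw [finsum_eq_sum_of_fintype, Fintype.sum_prod_type, Fin.sum_univ_castSucc] at h
        exact h
      have hs0 : ∀ e, 0 ≤ sf e :=
        fun e => Finset.sum_nonneg fun i _ => Finset.sum_nonneg fun a _ => hnonneg e _
      have hr0 : ∀ e a, 0 ≤ rf e a := fun e a => hnonneg e _
      have hrsum0 : ∀ e, 0 ≤ ∑ a : ZMod p, rf e a :=
        fun e => Finset.sum_nonneg fun a _ => hr0 e a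
      have hs1 : ∀ e, sf e ≤ 1 := fun e => by linarith [hsum e, hrsum0 e]
      have hscont : Continuous sf := by
        apply continuous_finset_sum _ fun i _ => continuous_finset_sum _ fun a _ => ?_
        exact (continuous_apply _).comp continuous_subtype_val
      -- the normalized first block lies in EnSpace p n
      have hν : ∀ (e : ↥(EnSpace p (n+1))), 0 < sf e →
          (fun b : Fin (n+1) × ZMod p => e.1 (b.1.castSucc, b.2) / sf e) ∈ EnSpace p n := by
        intro e hs
        refine ⟨fun b => div_nonneg (hnonneg e _) hs.le, ?_, ?_⟩
        · rw [finsum_eq_sum_of_fintype, ← Finset.sum_div,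
            show ∑ b : Fin (n+1) × ZMod p, e.1 (b.1.castSucc, b.2) = sf e from
              by rw [hsf, Fintype.sum_prod_type]]
          exact div_self hs.ne'
        · intro i a b ha hb
          refine e.2.2.2 i.castSucc a b ?_ ?_
          · have h2 := mul_pos ha hs
            rwa [div_mul_cancel₀ _ hs.ne'] at h2
          · have h2 := mul_pos hb hs
            rwa [div_mul_cancel₀ _ hs.ne'] at h2
      set xf : ↥(EnSpace p (n+1)) → X := fun e =>
        if h : 0 < sf e then (φ ⟨_, hν e h⟩).1 else Classical.arbitrary X with hxf
      have hxper : ∀ e, 0 < sf e → (⇑T)^[p] (xf e) = xf e := by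
        intro e h
        simp only [hxf, dif_pos h]
        exact (φ ⟨_, hν e h⟩).2
      have hsshift : ∀ (e e' : ↥(EnSpace p (n+1))),
          e'.1 = enShift p (n+1) e.1 → sf e' = sf e := by
        intro e e' hee
        simp only [hsf, hee, enShift]
        refine Finset.sum_congr rfl fun i _ => ?_
        calc ∑ a : ZMod p, e.1 (i.castSucc, a + 1)
            = ∑ a : ZMod p, (fun a => e.1 (i.castSucc, a)) (Equiv.addRight (1 : ZMod p) a) := by
              refine Finset.sum_congr rfl fun a _ => by simp
          _ = _ := Equiv.sum_comp (Equiv.addRight (1 : ZMod p))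
                (fun a => e.1 (i.castSucc, a))
      have hxshift : ∀ (e e' : ↥(EnSpace p (n+1))), e'.1 = enShift p (n+1) e.1 →
          0 < sf e → xf e' = T (xf e) := by
        intro e e' hee hs
        have hs' : 0 < sf e' := by rw [hsshift e e' hee]; exact hs
        simp only [hxf, dif_pos hs, dif_pos hs']
        have hν' : ((⟨_, hν e' hs'⟩ : ↥(EnSpace p n)) : Fin (n+1) × ZMod p → ℝ)
            = enShift p n ((⟨_, hν e hs⟩ : ↥(EnSpace p n)) : Fin (n+1) × ZMod p → ℝ) := by
          funext b
          simp only [enShift, hee, hsshift e e' hee]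
        rw [hφe ⟨_, hν e hs⟩ ⟨_, hν e' hs'⟩ hν']
        rfl
      -- the map into the subshift
      set yf : ↥(EnSpace p (n+1)) → ℤ → (Fin (M+1) → ℝ) := fun e k =>
        Fin.snoc (fun j => sf e * F ((σ ^ k) (xf e)) j)
          (∑ a : ZMod p, rf e a * g (a - (k : ZMod p))) with hyf
      have key : ∀ (w w' : EuclideanSpace ℝ (Fin (M+1))) (j : Fin (M+1)),
          1/4 ≤ |w j - w' j| → (1/4 : ℝ) ≤ ‖w - w'‖ := by
        intro w w' j h
        have h2 : w j - w' j = (w - w') j := rfl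
        rw [h2] at h
        exact le_trans h (zz_abs_le_norm _ _)
      have hmem : ∀ e : ↥(EnSpace p (n+1)),
          (fun k => WithLp.toLp 2 (yf e k)) ∈ XSet (M+1) (1/4) 1 := by
        intro e
        constructor
        · intro k j
          induction j using Fin.lastCases with
          | last =>
            simp only [PiLp.toLp_apply, hyf, Fin.snoc_last]
            constructor
            · exact Finset.sum_nonneg fun a _ => mul_nonneg (hr0 e a) (hg01 _).1
            · calc ∑ a : ZMod p, rf e a * g (a - (k : ZMod p))
                  ≤ ∑ a : ZMod p, rf e a :=
                    Finset.sum_le_sum fun a _ => mul_le_of_le_one_right (hr0 e a) (hg01 _).2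
                _ ≤ 1 := by linarith [hsum e, hs0 e]
          | cast j =>
            simp only [PiLp.toLp_apply, hyf, Fin.snoc_castSucc]
            have h1 := (hF01 ((σ ^ k) (xf e)) j).1
            have h2 := (hF01 ((σ ^ k) (xf e)) j).2
            constructor
            · exact mul_nonneg (hs0 e) h1
            · nlinarith [hs0 e, hs1 e]
        · intro k
          have hc1 : k + ((1:ℕ) : ℤ) = k + 1 := by norm_num
          rw [hc1]
          by_cases hhalf : 1/2 ≤ sf e
          · obtain ⟨j, hj1, hj0⟩ := hFsep ((σ ^ k) (xf e))
            have hpow : (σ ^ (k+1)) (xf e) = T ((σ ^ k) (xf e)) := by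
              rw [add_comm, zpow_add, zpow_one]
              rfl
            refine key _ _ j.castSucc ?_
            show 1/4 ≤ |yf e k j.castSucc - yf e (k+1) j.castSucc|
            simp only [hyf, Fin.snoc_castSucc, hpow, hj1, hj0, mul_one, mul_zero, sub_zero]
            rw [abs_of_nonneg (hs0 e)]
            linarith
          · have ht : 1/2 ≤ ∑ a : ZMod p, rf e a := by linarith [hsum e, hs1 e]
            have hex : ∃ a₀ : ZMod p, 0 < rf e a₀ := by
              by_contra hcon
              push_neg at hcon
              have : ∑ a : ZMod p, rf e a ≤ 0 :=
                Finset.sum_nonpos fun a _ => hcon a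
              linarith
            obtain ⟨a₀, ha₀⟩ := hex
            have hzero : ∀ b : ZMod p, b ≠ a₀ → rf e b = 0 := by
              intro b hb
              by_contra hcon
              have hbpos : 0 < rf e b := lt_of_le_of_ne (hr0 e b) (Ne.symm hcon)
              exact hb (e.2.2.2 (Fin.last (n+1)) b a₀ hbpos ha₀)
            have hsingle : ∀ c : ℝ → ℝ, True := fun _ => trivial
            have hsum1 : ∀ z : ZMod p, (∑ a : ZMod p, rf e a * g (a - z)) = rf e a₀ * g (a₀ - z) := by
              intro z
              refine Finset.sum_eq_single a₀ (fun b _ hb => by rw [hzero b hb, zero_mul])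
                (fun h => absurd (Finset.mem_univ a₀) h)
            have hra : 1/2 ≤ rf e a₀ := by
              have : ∑ a : ZMod p, rf e a = rf e a₀ :=
                Finset.sum_eq_single a₀ (fun b _ hb => hzero b hb)
                  (fun h => absurd (Finset.mem_univ a₀) h)
              linarith
            refine key _ _ (Fin.last M) ?_
            show 1/4 ≤ |yf e k (Fin.last M) - yf e (k+1) (Fin.last M)|
            simp only [hyf, Fin.snoc_last, hsum1]
            have hcastz : ((k + 1 : ℤ) : ZMod p) = (k : ZMod p) + 1 := by push_cast; ring
            rw [hcastz]
            have hgs := hgsep (a₀ - (k : ZMod p) - 1)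
            have hab : a₀ - (k : ZMod p) - 1 + 1 = a₀ - (k : ZMod p) := by ring
            rw [hab] at hgs
            have habs : |rf e a₀ * g (a₀ - (k : ZMod p)) - rf e a₀ * g (a₀ - ((k : ZMod p) + 1))|
                = rf e a₀ * |g (a₀ - (k : ZMod p)) - g (a₀ - (k : ZMod p) - 1)| := by
              rw [← mul_sub, abs_mul, abs_of_nonneg (hr0 e a₀)]
              congr 2
              ring_nf
            rw [habs]
            rw [abs_sub_comm] at hgs
            nlinarith
      have hper : ∀ e : ↥(EnSpace p (n+1)),
          (⟨fun k => WithLp.toLp 2 (yf e k), hmem e⟩ : ↥(XSet (M+1) (1/4) 1)) ∈ perSet (XShift (M+1) (1/4) 1) p := by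
        intro e
        show (XShift (M+1) (1/4) 1)^[p] _ = _
        apply Subtype.ext
        funext k
        rw [zz_xshift_iter]
        show WithLp.toLp 2 (yf e (k + p)) = WithLp.toLp 2 (yf e k)
        congr 1
        funext j
        induction j using Fin.lastCases with
        | last =>
          simp only [hyf, Fin.snoc_last]
          have hcastz : ((k + p : ℤ) : ZMod p) = (k : ZMod p) := by
            push_cast
            simp [ZMod.natCast_self]
          rw [hcastz]
        | cast j =>
          simp only [hyf, Fin.snoc_castSucc]
          rcases eq_or_lt_of_le (hs0 e) with h | h
          · rw [← h, zero_mul, zero_mul]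
          · have h1 : (σ ^ (k + (p:ℤ))) (xf e) = (σ ^ k) ((σ ^ (p:ℤ)) (xf e)) := by
              rw [zpow_add]
              rfl
            have h2 : (σ ^ (p:ℤ)) (xf e) = xf e := by
              rw [zpow_natCast]
              have h3 : ⇑(σ ^ p) = (⇑T)^[p] := Equiv.Perm.coe_pow _ _
              rw [h3]
              exact hxper e h
            rw [h1, h2]
      have hplain : ∀ k : ℤ, Continuous fun e : ↥(EnSpace p (n+1)) => yf e k := by
        intro k
        apply continuous_pi
        intro j
        induction j using Fin.lastCases with
        | last =>
          simp only [hyf, Fin.snoc_last]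
          apply continuous_finset_sum
          intro a _
          exact ((continuous_apply ((Fin.last (n+1)), a)).comp continuous_subtype_val).mul
            continuous_const
        | cast j =>
          simp only [hyf, Fin.snoc_castSucc]
          rw [continuous_iff_continuousAt]
          intro e₀
          by_cases h0 : 0 < sf e₀
          · have hU : IsOpen {e : ↥(EnSpace p (n+1)) | 0 < sf e} :=
              isOpen_lt continuous_const hscont
            have hCO : ContinuousOn (fun e => sf e * F ((σ ^ k) (xf e)) j)
                {e : ↥(EnSpace p (n+1)) | 0 < sf e} := by
              rw [continuousOn_iff_continuous_restrict]
              have hres : Set.domRestrict {e : ↥(EnSpace p (n+1)) | 0 < sf e}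
                  (fun e => sf e * F ((σ ^ k) (xf e)) j)
                  = fun u : {e : ↥(EnSpace p (n+1)) | 0 < sf e} =>
                      sf u.1 * F ((σ ^ k) ((φ ⟨_, hν u.1 u.2⟩).1)) j := by
                funext u
                simp only [Set.domRestrict_apply, hxf]
                rw [dif_pos (show 0 < sf u.1 from u.2)]
              rw [hres]
              refine Continuous.mul (hscont.comp continuous_subtype_val) ?_
              exact (hFc j).comp ((zz_perm_zpow_cont T k).comp
                (continuous_subtype_val.comp (hφc.comp (Continuous.subtype_mk
                  (continuous_pi (fun b => Continuous.div
                    ((continuous_apply (b.1.castSucc, b.2)).comp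
                      (continuous_subtype_val.comp continuous_subtype_val))
                    (hscont.comp continuous_subtype_val)
                    (fun u => (u.2 : 0 < sf u.1).ne'))) _))))
            exact hCO.continuousAt (hU.mem_nhds h0)
          · have hz : sf e₀ = 0 := le_antisymm (not_lt.1 h0) (hs0 e₀)
            have ht0 : Filter.Tendsto (fun e => sf e * F ((σ ^ k) (xf e)) j)
                (nhds e₀) (nhds 0) := by
              apply squeeze_zero (g := sf)
                (fun e => mul_nonneg (hs0 e) (hF01 _ _).1)
                (fun e => by nlinarith [(hF01 ((σ ^ k) (xf e)) j).2, hs0 e,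
                  (hF01 ((σ ^ k) (xf e)) j).1])
              have h4 := hscont.continuousAt (x := e₀)
              rwa [ContinuousAt, hz] at h4
            have hv0 : sf e₀ * F ((σ ^ k) (xf e₀)) j = 0 := by rw [hz, zero_mul]
            rw [ContinuousAt]
            show Filter.Tendsto _ _ (nhds (sf e₀ * F ((σ ^ k) (xf e₀)) j))
            rw [hv0]
            exact ht0
      have hψc : Continuous fun e : ↥(EnSpace p (n+1)) =>
          (fun k => WithLp.toLp 2 (yf e k)) := by
        apply continuous_pi
        intro k
        exact (PiLp.continuous_toLp 2 (fun _ : Fin (M+1) => ℝ)).comp (hplain k)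
      refine ⟨n+1, fun e => ⟨⟨fun k => WithLp.toLp 2 (yf e k), hmem e⟩, hper e⟩, rfl,
        Continuous.subtype_mk (Continuous.subtype_mk hψc _) _, ?_⟩
      intro e e' hee
      apply Subtype.ext
      apply Subtype.ext
      funext k
      show WithLp.toLp 2 (yf e' k) = WithLp.toLp 2 (yf e (k+1))
      congr 1
      funext j
      induction j using Fin.lastCases with
      | last =>
        simp only [hyf, Fin.snoc_last]
        have hrshift : ∀ a : ZMod p, rf e' a = rf e (a + 1) := by
          intro a
          simp only [hrf, hee, enShift]
        have hcastz : ((k + 1 : ℤ) : ZMod p) = (k : ZMod p) + 1 := by push_cast; ring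
        rw [hcastz]
        calc ∑ a : ZMod p, rf e' a * g (a - (k : ZMod p))
            = ∑ a : ZMod p, (fun b => rf e b * g (b - ((k : ZMod p) + 1)))
                (Equiv.addRight (1 : ZMod p) a) := by
              refine Finset.sum_congr rfl fun a _ => ?_
              simp only [Equiv.coe_addRight, hrshift]
              congr 2
              ring
          _ = ∑ b : ZMod p, rf e b * g (b - ((k : ZMod p) + 1)) :=
              Equiv.sum_comp (Equiv.addRight (1 : ZMod p))
                (fun b => rf e b * g (b - ((k : ZMod p) + 1)))
      | cast j =>
        simp only [hyf, Fin.snoc_castSucc]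
        rcases eq_or_lt_of_le (hs0 e) with h | h
        · rw [hsshift e e' hee, ← h, zero_mul, zero_mul]
        · have hpow : (σ ^ k) (T (xf e)) = (σ ^ (k+1)) (xf e) := by
            rw [zpow_add_one]
            rfl
          rw [hsshift e e' hee, hxshift e e' hee h, hpow]
end

section
/- Let (X, T) be a fixed-point free compact dynamical system. Then there is a constant C > 0 such that for every prime p, the ℤ_p-index of the free ℤ_p-space (P_p(X), T) is finite and satisfies ind_p P_p(X) < C·p. -/
open Real Complex

noncomputable def cexpE (p : ℕ) (t : ℤ) : ℂ := Complex.exp ((π * t / p : ℝ) * Complex.I)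

lemma cexpE_add (p : ℕ) (a b : ℤ) : cexpE p (a + b) = cexpE p a * cexpE p b := by
  rw [cexpE, cexpE, cexpE, ← Complex.exp_add]
  congr 1
  push_cast
  ring

lemma cexpE_zero (p : ℕ) : cexpE p 0 = 1 := by simp [cexpE]

lemma abs_cexpE (p : ℕ) (t : ℤ) : ‖cexpE p t‖ = 1 :=
  Complex.norm_exp_ofReal_mul_I _

lemma cexpE_period (p : ℕ) (hp : p ≠ 0) (t j : ℤ) : cexpE p (t + 2 * p * j) = cexpE p t := by
  rw [cexpE_add]
  have h1 : (π * ((2 * p * j : ℤ) : ℝ) / p) = (j : ℝ) * (2 * π) := by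
    have : (p : ℝ) ≠ 0 := Nat.cast_ne_zero.mpr hp
    field_simp
    push_cast; ring
  have h2 : cexpE p (2 * p * j) = 1 := by
    rw [cexpE, h1, show ((((j:ℝ) * (2*π) : ℝ)) : ℂ) * Complex.I = (j:ℂ) * (2 * π * Complex.I) by
      push_cast; ring]
    exact Complex.exp_int_mul_two_pi_mul_I j
  rw [h2, mul_one]

lemma cexpE_congr (p : ℕ) (hp : p ≠ 0) (a b : ℤ) (h : ((a : ZMod p) = (b : ZMod p))) :
    cexpE p (2 * a) = cexpE p (2 * b) := by
  have hd : (p:ℤ) ∣ (a - b) := by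
    rwa [← ZMod.intCast_zmod_eq_zero_iff_dvd, Int.cast_sub, sub_eq_zero]
  obtain ⟨j, hj⟩ := hd
  have : 2 * a = 2 * b + 2 * p * j := by linarith
  rw [this, cexpE_period p hp]

lemma cexpE_nat_mul (p : ℕ) (n : ℕ) (t : ℤ) : cexpE p (n * t) = (cexpE p t) ^ n := by
  induction n with
  | zero => simp [cexpE_zero]
  | succ n ih =>
    have : ((n+1 : ℕ) : ℤ) * t = (n : ℤ) * t + t := by push_cast; ring
    rw [this, cexpE_add, ih, pow_succ]

lemma cexpE_ne_one (p : ℕ) (hp : p ≠ 0) (j : ℤ) (hj : ¬ (p:ℤ) ∣ j) : cexpE p (2 * j) ≠ 1 := by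
  intro h
  rw [cexpE, Complex.exp_eq_one_iff] at h
  obtain ⟨n, hn⟩ := h
  have hI : ((π * ((2*j : ℤ):ℝ) / p : ℝ) : ℂ) = (n : ℂ) * (2 * π) := by
    have := hn
    rw [show (n:ℂ) * (2 * ↑π * Complex.I) = ((n:ℂ) * (2 * ↑π)) * Complex.I by ring] at this
    exact mul_right_cancel₀ Complex.I_ne_zero this
  have hR : (π * ((2*j : ℤ):ℝ) / p : ℝ) = (n : ℝ) * (2 * π) := by
    have : (((n : ℝ) * (2 * π) : ℝ) : ℂ) = (n : ℂ) * (2 * π) := by push_cast; ring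
    exact_mod_cast hI.trans this.symm
  have hpne : (p : ℝ) ≠ 0 := Nat.cast_ne_zero.mpr hp
  have : (j : ℝ) = (n : ℝ) * p := by
    field_simp at hR
    push_cast at hR
    nlinarith [Real.pi_ne_zero, Real.pi_pos, hR]
  have : j = n * p := by exact_mod_cast this
  exact hj ⟨n, by linarith⟩

lemma sum_cexpE_eq_zero (p : ℕ) (hp : p ≠ 0) (j : ℤ) (hj : ¬ (p:ℤ) ∣ j) :
    ∑ m ∈ Finset.range p, cexpE p (2 * m * j) = 0 := by
  have hterm : ∀ m : ℕ, cexpE p (2 * m * j) = (cexpE p (2*j))^m := fun m => by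
    rw [← cexpE_nat_mul]; congr 1; ring
  simp_rw [hterm]
  rw [geom_sum_eq (cexpE_ne_one p hp j hj)]
  have hpow : cexpE p (2*j) ^ p = 1 := by
    rw [← cexpE_nat_mul]
    have : (p : ℤ) * (2 * j) = 0 + 2 * p * j := by ring
    rw [this, cexpE_period p hp, cexpE_zero]
  simp [hpow]

open Real Complex

section
variable (p : ℕ)

lemma abs_cos_le_aux (hp : 2 ≤ p) (r : ℕ) (h1 : 1 ≤ r) (h2 : 2 * r ≤ p) :
    |Real.cos (π * r / p)| ≤ Real.cos (π / p) := by
  have hppos : (0:ℝ) < p := by positivity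
  have hx : π * r / p ≤ π / 2 := by
    rw [div_le_div_iff₀ hppos two_pos]
    have : (2:ℝ) * r ≤ p := by exact_mod_cast h2
    nlinarith [Real.pi_pos]
  have hnn : 0 ≤ Real.cos (π * r / p) :=
    Real.cos_nonneg_of_mem_Icc ⟨le_trans (neg_nonpos.mpr (by positivity)) (by positivity), hx⟩
  rw [_root_.abs_of_nonneg hnn]
  apply Real.cos_le_cos_of_nonneg_of_le_pi
  · positivity
  · nlinarith [Real.pi_pos]
  · rw [div_le_div_iff₀ hppos hppos]
    have h1R : (1:ℝ) ≤ r := by exact_mod_cast h1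
    nlinarith [mul_pos Real.pi_pos hppos, mul_nonneg (mul_pos Real.pi_pos hppos).le (sub_nonneg.mpr h1R)]

lemma abs_cos_le (hp : 2 ≤ p) (D : ℤ) (hD : ¬ (p:ℤ) ∣ D) :
    |Real.cos (π * D / p)| ≤ Real.cos (π / p) := by
  have hp0 : (p:ℤ) ≠ 0 := by exact_mod_cast (by omega : p ≠ 0)
  have hpR : (0:ℝ) < p := by positivity
  set q : ℤ := D / (p:ℤ) with hq
  have hmod0 : 0 ≤ D % (p:ℤ) := Int.emod_nonneg D hp0
  have hmodlt : D % (p:ℤ) < p := Int.emod_lt_of_pos D (by exact_mod_cast (by omega : 0 < p))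
  set r : ℕ := (D % (p:ℤ)).toNat with hr
  have hrD : (r : ℤ) = D % (p:ℤ) := Int.toNat_of_nonneg hmod0
  have hr0 : 1 ≤ r := by
    rcases Nat.eq_zero_or_pos r with h | h
    · exfalso; apply hD
      have : D % (p:ℤ) = 0 := by omega
      exact Int.dvd_of_emod_eq_zero this
    · omega
  have hrp : r < p := by omega
  have hD' : D = (p:ℤ) * q + r := by rw [hrD, hq]; exact (Int.mul_ediv_add_emod D p).symm
  have hsplit : π * D / p = π * r / p + q * π := by
    rw [hD']
    push_cast
    field_simp
    ring
  rw [hsplit, Real.cos_antiperiodic.add_int_mul_eq, abs_mul]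
  have hu : |(((q.negOnePow : ℤ)) : ℝ)| = 1 := by
    have := Int.abs_negOnePow q
    calc |(((q.negOnePow : ℤ)) : ℝ)| = ((|(q.negOnePow : ℤ)| : ℤ) : ℝ) := by
          rw [Int.cast_abs]
      _ = 1 := by rw [this]; norm_num
  rw [hu, one_mul]
  rcases le_or_gt (2 * r) p with h | h
  · exact abs_cos_le_aux p hp r hr0 h
  · have h2 : π * r / p = π - π * (p - r : ℕ) / p := by
      have : ((p - r : ℕ) : ℝ) = (p : ℝ) - r := by
        push_cast [Nat.cast_sub hrp.le]; ring
      rw [this]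
      field_simp
      ring
    rw [h2, Real.cos_pi_sub, abs_neg]
    exact abs_cos_le_aux p hp (p - r) (by omega) (by omega)

lemma exists_arc (hp : 2 ≤ p) (z : ℂ) (hz : z ≠ 0) :
    ∃ t : ℤ, Real.cos (π/p) * ‖z‖ < (z * cexpE p (-t)).re := by
  have hpR : (0:ℝ) < p := by positivity
  refine ⟨round (z.arg * p / π), ?_⟩
  set t : ℤ := round (z.arg * p / π) with ht
  have hzw : z * cexpE p (-t) = (‖z‖ : ℂ) * Complex.exp ((z.arg - t*π/p : ℝ) * Complex.I) := by
    conv_lhs => rw [← Complex.norm_mul_exp_arg_mul_I z]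
    rw [cexpE, mul_assoc, ← Complex.exp_add]
    congr 2
    push_cast
    ring
  rw [hzw]
  have hre : ((‖z‖ : ℂ) * Complex.exp ((z.arg - t*π/p : ℝ) * Complex.I)).re
      = ‖z‖ * Real.cos (z.arg - t*π/p) := by
    rw [Complex.re_ofReal_mul, Complex.exp_ofReal_mul_I_re]
  rw [hre]
  have h1 : |z.arg - t*π/p| ≤ π/(2*p) := by
    have hround : |z.arg * p / π - t| ≤ 1/2 := abs_sub_round _
    have heq : z.arg - t*π/p = (z.arg * p / π - t) * (π/p) := by
      field_simp
    rw [heq, abs_mul, abs_of_pos (by positivity : (0:ℝ) < π/p)]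
    calc |z.arg * p / π - t| * (π/p) ≤ (1/2) * (π/p) := by
          apply mul_le_mul_of_nonneg_right hround (by positivity)
      _ = π/(2*p) := by ring
  have h2 : Real.cos (π/p) < Real.cos (z.arg - t*π/p) := by
    have h2R : (2:ℝ) ≤ p := by exact_mod_cast hp
    have ha : Real.cos (π/p) < Real.cos (π/(2*p)) := by
      apply Real.strictAntiOn_cos
      · refine ⟨by positivity, ?_⟩
        rw [div_le_iff₀ (by positivity)]; nlinarith [Real.pi_pos]
      · refine ⟨by positivity, ?_⟩
        rw [div_le_iff₀ hpR]; nlinarith [Real.pi_pos]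
      · rw [div_lt_div_iff₀ (by positivity) hpR]; nlinarith [Real.pi_pos]
    have hb : Real.cos (π/(2*p)) ≤ Real.cos (z.arg - t*π/p) := by
      rw [← Real.cos_abs (z.arg - t*π/p)]
      apply Real.cos_le_cos_of_nonneg_of_le_pi (abs_nonneg _) _ h1
      rw [div_le_iff₀ (by positivity)]
      have h2R : (2:ℝ) ≤ p := by exact_mod_cast hp
      nlinarith [Real.pi_pos]
    linarith
  have hzpos : 0 < ‖z‖ := norm_pos_iff.mpr hz
  calc Real.cos (π/p) * ‖z‖ < Real.cos (z.arg - t*π/p) * ‖z‖ := by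
        apply mul_lt_mul_of_pos_right h2 hzpos
    _ = ‖z‖ * Real.cos (z.arg - t*π/p) := by ring

lemma unique_core (hp : 2 ≤ p) (z : ℂ) (D t u : ℤ) (htu : t - u = 2 * D)
    (h1 : Real.cos (π/p) * ‖z‖ < (z * cexpE p (-t)).re)
    (h2 : Real.cos (π/p) * ‖z‖ < (z * cexpE p (-u)).re) :
    (p:ℤ) ∣ D := by
  by_contra hD
  have hc := abs_cos_le p hp D hD
  have hcosnn : 0 ≤ Real.cos (π/p) := by
    apply Real.cos_nonneg_of_mem_Icc
    have h2R : (2:ℝ) ≤ p := by exact_mod_cast hp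
    constructor
    · exact le_trans (neg_nonpos.mpr (by positivity)) (by positivity)
    · rw [div_le_div_iff₀ (by positivity) two_pos]
      nlinarith [Real.pi_pos]
  have hcos : cexpE p D + cexpE p (-D) = ((2 * Real.cos (π * D / p) : ℝ) : ℂ) := by
    rw [cexpE, cexpE]
    have hneg : (π * ((-D : ℤ) : ℝ) / p : ℝ) = -(π * D / p) := by push_cast; ring
    rw [hneg, Complex.ofReal_neg, neg_mul, Complex.exp_mul_I, ← neg_mul, Complex.exp_mul_I,
      Complex.cos_neg, Complex.sin_neg]
    push_cast [Complex.ofReal_cos]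
    ring
  have hsum : cexpE p (-t) + cexpE p (-u)
      = cexpE p (-(u+D)) * ((2 * Real.cos (π * D / p) : ℝ) : ℂ) := by
    have e1 : (-t : ℤ) = -(u+D) + -D := by omega
    have e2 : (-u : ℤ) = -(u+D) + D := by omega
    rw [e1, e2, cexpE_add, cexpE_add, ← hcos]
    ring
  have key : (z * cexpE p (-t)).re + (z * cexpE p (-u)).re
      ≤ ‖z‖ * (2 * |Real.cos (π * D / p)|) := by
    have hre : (z * cexpE p (-t)).re + (z * cexpE p (-u)).re
        = (z * (cexpE p (-t) + cexpE p (-u))).re := by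
      rw [mul_add, Complex.add_re]
    rw [hre, hsum]
    calc (z * (cexpE p (-(u+D)) * ((2 * Real.cos (π * D / p) : ℝ) : ℂ))).re
        ≤ ‖z * (cexpE p (-(u+D)) * ((2 * Real.cos (π * D / p) : ℝ) : ℂ))‖ :=
          Complex.re_le_norm _
      _ = ‖z‖ * (‖cexpE p (-(u+D))‖ * |2 * Real.cos (π * D / p)|) := by
          rw [norm_mul, norm_mul, Complex.norm_real, Real.norm_eq_abs]
      _ = ‖z‖ * (2 * |Real.cos (π * D / p)|) := by
          rw [abs_cexpE, one_mul, abs_mul, _root_.abs_two]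
  have hzn : 0 ≤ ‖z‖ := norm_nonneg z
  nlinarith [h1, h2, key, hc, hzn]

end

open Real Complex Function

noncomputable def rhoB (δ : ℝ) {X : Type*} [MetricSpace X] (c y : X) : ℝ :=
  max 0 (δ/3 - dist y c)

noncomputable def zcf {X : Type*} [MetricSpace X] (T : X → X) (p : ℕ) [NeZero p] (δ : ℝ)
    (c : X) (κ : ℕ) (x : X) : ℂ :=
  ∑ g : ZMod p, cexpE p (2 * κ * (g.val : ℤ)) * ((rhoB δ c (T^[g.val] x) : ℝ) : ℂ)

noncomputable def Fcf {X : Type*} [MetricSpace X] (T : X → X) (p : ℕ) [NeZero p] (δ : ℝ)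
    (c : X) (κ : ℕ) (sv : ℕ) (x : X) (g : ZMod p) : ℝ :=
  max 0 ((zcf T p δ c κ x * cexpE p (-(2 * κ * (g.val : ℤ) + sv))).re
    - Real.cos (π/p) * ‖zcf T p δ c κ x‖)

lemma iter_mod {X : Type*} (f : X → X) (p : ℕ) (x : X) (hx : f^[p] x = x) (a : ℕ) :
    f^[a % p] x = f^[a] x := by
  conv_rhs => rw [← Nat.mod_add_div a p, Function.iterate_add_apply, Function.iterate_mul]
  rw [(Function.IsFixedPt.iterate hx (a / p) : (f^[p])^[a/p] x = x)]

lemma zcf_shift {X : Type*} [MetricSpace X] (T : X → X) (p : ℕ) [NeZero p] (hp2 : 2 ≤ p)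
    (δ : ℝ) (c : X) (κ : ℕ) (x : X) (hx : T^[p] x = x) :
    zcf T p δ c κ (T x) = cexpE p (-(2*κ)) * zcf T p δ c κ x := by
  haveI : Fact (1 < p) := ⟨by omega⟩
  rw [zcf, zcf, Finset.mul_sum]
  apply Fintype.sum_equiv (Equiv.addRight (1 : ZMod p))
    (fun g => cexpE p (2 * κ * (g.val : ℤ)) * ((rhoB δ c (T^[g.val] (T x)) : ℝ) : ℂ))
    (fun h => cexpE p (-(2*(κ:ℤ))) * (cexpE p (2 * κ * (h.val : ℤ)) * ((rhoB δ c (T^[h.val] x) : ℝ) : ℂ)))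
  intro g
  symm
  show cexpE p (-(2*(κ:ℤ))) * (cexpE p (2 * κ * (((g+1).val : ℤ))) * ((rhoB δ c (T^[(g+1).val] x) : ℝ) : ℂ))
      = cexpE p (2 * κ * (g.val : ℤ)) * ((rhoB δ c (T^[g.val] (T x)) : ℝ) : ℂ)
  have hpt : T^[g.val] (T x) = T^[(g + 1).val] x := by
    have h1 : (g + 1).val = (g.val + 1) % p := by
      rw [ZMod.val_add, ZMod.val_one]
    rw [h1, iter_mod T p x hx, ← Function.iterate_succ_apply]
  have hco : cexpE p (-(2*(κ:ℤ))) * cexpE p (2*κ*(((g+1).val : ℤ))) = cexpE p (2*κ*(g.val:ℤ)) := by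
    rw [← cexpE_add]
    rw [show (-(2*(κ:ℤ)) + 2*κ*(((g+1).val : ℤ))) = 2*((κ:ℤ)*(((g+1).val:ℤ)) - κ) by ring,
      show (2*(κ:ℤ)*(g.val:ℤ)) = 2*((κ:ℤ)*(g.val:ℤ)) by ring]
    apply cexpE_congr p (NeZero.ne p)
    push_cast
    simp only [ZMod.natCast_val, ZMod.cast_id]
    ring
  rw [hpt, ← mul_assoc, hco]

lemma Fcf_shift {X : Type*} [MetricSpace X] (T : X → X) (p : ℕ) [NeZero p] (hp2 : 2 ≤ p)
    (δ : ℝ) (c : X) (κ : ℕ) (sv : ℕ) (x : X) (hx : T^[p] x = x) (g : ZMod p) :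
    Fcf T p δ c κ sv (T x) g = Fcf T p δ c κ sv x (g+1) := by
  rw [Fcf, Fcf, zcf_shift T p hp2 δ c κ x hx]
  have habs : ‖cexpE p (-(2*(κ:ℤ))) * zcf T p δ c κ x‖ = ‖zcf T p δ c κ x‖ := by
    rw [norm_mul, abs_cexpE, one_mul]
  have hre : (cexpE p (-(2*(κ:ℤ))) * zcf T p δ c κ x * cexpE p (-(2*κ*(g.val:ℤ) + sv))).re
      = (zcf T p δ c κ x * cexpE p (-(2*(κ:ℤ)*(((g+1).val:ℤ)) + sv))).re := by
    rw [mul_comm (cexpE p (-(2*(κ:ℤ)))) (zcf T p δ c κ x), mul_assoc, ← cexpE_add]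
    congr 2
    rw [show (-(2*(κ:ℤ)) + -(2*κ*(g.val:ℤ) + sv)) = 2*(-((κ:ℤ)*((g.val:ℤ)+1))) + (-(sv:ℤ)) by ring,
      show (-(2*(κ:ℤ)*(((g+1).val:ℤ)) + sv)) = 2*(-((κ:ℤ)*(((g+1).val:ℤ)))) + (-(sv:ℤ)) by ring,
      cexpE_add, cexpE_add]
    congr 1
    apply cexpE_congr p (NeZero.ne p)
    push_cast
    simp only [ZMod.natCast_val, ZMod.cast_id]
    try ring
  rw [habs, hre]

lemma nonvanish {X : Type*} [MetricSpace X] (T : X → X) (p : ℕ) [NeZero p] (hp2 : 2 ≤ p)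
    (δ : ℝ) (hδpos : 0 < δ) (x : X) (hδ : δ ≤ dist x (T x)) (c₀ : X) (hc₀ : dist x c₀ < δ/3)
    (hx : T^[p] x = x)
    (H : ∀ κ, 1 ≤ κ → κ ≤ p - 1 → zcf T p δ c₀ κ x = 0) : False := by
  haveI : Fact (1 < p) := ⟨by omega⟩
  set v : ZMod p → ℝ := fun g => rhoB δ c₀ (T^[g.val] x) with hv
  -- the two telescoping sums
  have hterm : ∀ (w : ℕ → ℤ) (m : ℕ),
      cexpE p (w m) * zcf T p δ c₀ m x = ∑ g : ZMod p, (v g : ℂ) * cexpE p (w m + 2*m*(g.val:ℤ)) := by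
    intro w m
    rw [zcf, Finset.mul_sum]
    apply Finset.sum_congr rfl
    intro g _
    rw [cexpE_add]
    ring
  have hswap : ∀ (w : ℕ → ℤ), ∑ m ∈ Finset.range p, cexpE p (w m) * zcf T p δ c₀ m x
      = ∑ g : ZMod p, (v g : ℂ) * ∑ m ∈ Finset.range p, cexpE p (w m + 2*m*(g.val:ℤ)) := by
    intro w
    simp_rw [hterm w]
    rw [Finset.sum_comm]
    simp_rw [Finset.mul_sum]
  have hvanish : ∀ (w : ℕ → ℤ), ∑ m ∈ Finset.range p, cexpE p (w m) * zcf T p δ c₀ m x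
      = cexpE p (w 0) * zcf T p δ c₀ 0 x := by
    intro w
    apply Finset.sum_eq_single_of_mem 0 (Finset.mem_range.mpr (by omega))
    intro m hm hm0
    have hmlt := Finset.mem_range.mp hm
    rw [H m (by omega) (by omega), mul_zero]
  have SA : ∑ g : ZMod p, (v g:ℂ) * ∑ m ∈ Finset.range p, cexpE p (-(2*(m:ℤ)) + 2*m*(g.val:ℤ))
      = (v 1 : ℂ) * p := by
    rw [Fintype.sum_eq_single (1 : ZMod p) ?_]
    · have h1 : ∀ m ∈ Finset.range p, cexpE p (-(2*(m:ℤ)) + 2*m*(((1:ZMod p).val:ℤ))) = 1 := by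
        intro m _
        rw [ZMod.val_one]
        norm_num [cexpE_zero]
      rw [Finset.sum_congr rfl h1, Finset.sum_const, Finset.card_range]
      simp [mul_comm]
    · intro b hb
      have hj : ¬ (p:ℤ) ∣ ((b.val:ℤ) - 1) := by
        intro hdvd
        apply hb
        have h0 : (((b.val:ℤ) - 1 : ℤ) : ZMod p) = 0 := (ZMod.intCast_zmod_eq_zero_iff_dvd _ p).mpr hdvd
        push_cast at h0
        rw [ZMod.natCast_val, ZMod.cast_id] at h0
        exact sub_eq_zero.mp h0
      have h2 : ∀ m ∈ Finset.range p, cexpE p (-(2*(m:ℤ)) + 2*m*((b.val:ℤ)))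
          = cexpE p (2*m*((b.val:ℤ)-1)) := by
        intro m _; congr 1; ring
      rw [Finset.sum_congr rfl h2, sum_cexpE_eq_zero p (NeZero.ne p) _ hj, mul_zero]
  have SB : ∑ g : ZMod p, (v g:ℂ) * ∑ m ∈ Finset.range p, cexpE p ((0:ℤ) + 2*m*(g.val:ℤ))
      = (v 0 : ℂ) * p := by
    rw [Fintype.sum_eq_single (0 : ZMod p) ?_]
    · have h1 : ∀ m ∈ Finset.range p, cexpE p ((0:ℤ) + 2*m*(((0:ZMod p).val:ℤ))) = 1 := by
        intro m _
        rw [ZMod.val_zero]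
        norm_num [cexpE_zero]
      rw [Finset.sum_congr rfl h1, Finset.sum_const, Finset.card_range]
      simp [mul_comm]
    · intro b hb
      have hj : ¬ (p:ℤ) ∣ ((b.val:ℤ)) := by
        intro hdvd
        apply hb
        have h0 : (((b.val:ℤ)) : ZMod p) = 0 := (ZMod.intCast_zmod_eq_zero_iff_dvd _ p).mpr hdvd
        push_cast at h0
        rwa [ZMod.natCast_val, ZMod.cast_id] at h0
      have h2 : ∀ m ∈ Finset.range p, cexpE p ((0:ℤ) + 2*m*((b.val:ℤ)))
          = cexpE p (2*m*((b.val:ℤ))) := by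
        intro m _; congr 1; ring
      rw [Finset.sum_congr rfl h2, sum_cexpE_eq_zero p (NeZero.ne p) _ hj, mul_zero]
  have hv10 : v 1 = v 0 := by
    have e1 : (v 1 : ℂ) * p = (v 0 : ℂ) * p := by
      rw [← SA, ← SB, ← hswap (fun m => -(2*(m:ℤ))), ← hswap (fun _ => (0:ℤ)),
        hvanish (fun m => -(2*(m:ℤ))), hvanish (fun _ => (0:ℤ))]
      norm_num
    have hpc : (p : ℂ) ≠ 0 := Nat.cast_ne_zero.mpr (NeZero.ne p)
    have := mul_right_cancel₀ hpc e1
    exact_mod_cast this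
  have hv1 : v 1 = rhoB δ c₀ (T x) := by
    rw [hv]
    simp [ZMod.val_one]
  have hv0 : v 0 = rhoB δ c₀ x := by
    rw [hv]
    simp [ZMod.val_zero]
  have hx0 : 0 < rhoB δ c₀ x := by
    rw [rhoB]
    exact lt_max_iff.mpr (Or.inr (by linarith))
  have hx1 : 0 < rhoB δ c₀ (T x) := by
    rw [← hv1, hv10, hv0]
    exact hx0
  have hd1 : dist (T x) c₀ < δ/3 := by
    rw [rhoB] at hx1
    rcases lt_max_iff.mp hx1 with h | h
    · exact absurd h (lt_irrefl 0)
    · linarith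
  have : dist x (T x) ≤ dist x c₀ + dist (T x) c₀ := by
    rw [dist_comm (T x) c₀]
    exact dist_triangle x c₀ (T x)
  linarith

open Real Complex Function

noncomputable def PhiF {X : Type*} [MetricSpace X] (T : X → X) (p : ℕ) [NeZero p] (δ : ℝ)
    {s : Finset X} (i : {c // c ∈ s} × Fin (p-1) × Fin 2) (x : X) (g : ZMod p) : ℝ :=
  Fcf T p δ i.1.1 (i.2.1.val+1) i.2.2.val x g

noncomputable def SigF {X : Type*} [MetricSpace X] (T : X → X) (p : ℕ) [NeZero p] (δ : ℝ)
    (s : Finset X) (x : X) : ℝ :=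
  ∑ i : {c // c ∈ s} × Fin (p-1) × Fin 2, ∑ g : ZMod p, PhiF T p δ i x g

lemma PhiF_nonneg {X : Type*} [MetricSpace X] (T : X → X) (p : ℕ) [NeZero p] (δ : ℝ)
    {s : Finset X} (i : {c // c ∈ s} × Fin (p-1) × Fin 2) (x : X) (g : ZMod p) :
    0 ≤ PhiF T p δ i x g := le_max_left 0 _

lemma PhiF_cont {X : Type*} [MetricSpace X] {T : X → X} (hT : Continuous T) (p : ℕ) [NeZero p]
    (δ : ℝ) {s : Finset X} (i : {c // c ∈ s} × Fin (p-1) × Fin 2) (g : ZMod p) :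
    Continuous fun x => PhiF T p δ i x g := by
  have hz : Continuous fun x => zcf T p δ i.1.1 (i.2.1.val+1) x := by
    unfold zcf
    apply continuous_finset_sum
    intro a _
    apply Continuous.mul continuous_const
    apply Complex.continuous_ofReal.comp
    unfold rhoB
    apply Continuous.max continuous_const
    apply Continuous.sub continuous_const
    exact (hT.iterate a.val).dist continuous_const
  unfold PhiF Fcf
  apply Continuous.max continuous_const
  apply Continuous.sub
  · exact Complex.continuous_re.comp (hz.mul continuous_const)
  · exact continuous_const.mul (continuous_norm.comp hz)

lemma SigF_cont {X : Type*} [MetricSpace X] {T : X → X} (hT : Continuous T) (p : ℕ) [NeZero p]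
    (δ : ℝ) (s : Finset X) : Continuous (SigF T p δ s) := by
  unfold SigF
  exact continuous_finset_sum _ fun i _ => continuous_finset_sum _ fun g _ => PhiF_cont hT p δ i g

lemma PhiF_shift {X : Type*} [MetricSpace X] (T : X → X) (p : ℕ) [NeZero p] (hp2 : 2 ≤ p)
    (δ : ℝ) {s : Finset X} (i : {c // c ∈ s} × Fin (p-1) × Fin 2) (x : X) (hx : T^[p] x = x)
    (g : ZMod p) : PhiF T p δ i (T x) g = PhiF T p δ i x (g+1) :=
  Fcf_shift T p hp2 δ i.1.1 (i.2.1.val+1) i.2.2.val x hx g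

lemma SigF_shift {X : Type*} [MetricSpace X] (T : X → X) (p : ℕ) [NeZero p] (hp2 : 2 ≤ p)
    (δ : ℝ) (s : Finset X) (x : X) (hx : T^[p] x = x) :
    SigF T p δ s (T x) = SigF T p δ s x := by
  unfold SigF
  apply Finset.sum_congr rfl
  intro i _
  calc ∑ g : ZMod p, PhiF T p δ i (T x) g = ∑ g : ZMod p, PhiF T p δ i x (g+1) :=
        Finset.sum_congr rfl fun g _ => PhiF_shift T p hp2 δ i x hx g
    _ = ∑ g : ZMod p, PhiF T p δ i x g :=
        Fintype.sum_equiv (Equiv.addRight (1 : ZMod p)) _ _ (fun g => rfl)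




open Function

/-- The ℤ_p-index of a ℤ_p-space `(X, T)`: the least `n` (in `ℕ∞`) such that there is a
ℤ_p-equivariant continuous map `X → E_nℤ_p`. -/
noncomputable def zpIndex (p : ℕ) (X : Type*) [TopologicalSpace X] (T : X → X) : ℕ∞ :=
  sInf {k : ℕ∞ | ∃ (n : ℕ) (φ : X → EnSpace p n),
    k = (n : ℕ∞) ∧ Continuous φ ∧
    ∀ x : X, (φ (T x) : Fin (n+1) × ZMod p → ℝ)
      = enShift p n ((φ x : Fin (n+1) × ZMod p → ℝ))}

/-- **Linear growth of the index.** For a fixed-point free compact dynamical system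
`(X, T)` there is `C > 0` such that for every prime `p` the ℤ_p-index of the free
ℤ_p-space `(P_p(X), T)` is finite and `ind_p P_p(X) < C·p`. -/
theorem index_linear_growth (X : Type*) [TopologicalSpace X] [CompactSpace X]
    [TopologicalSpace.MetrizableSpace X] (T : X ≃ₜ X) (hT : ∀ x : X, T x ≠ x) :
    ∃ C : ℝ, 0 < C ∧ ∀ p : ℕ, p.Prime →
      ∃ k : ℕ, zpIndex p (perSet (⇑T) p) (perMap (⇑T) p) = (k : ℕ∞) ∧ (k : ℝ) < C * p := by
  rcases isEmpty_or_nonempty X with hX | hX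
  · refine ⟨1, one_pos, fun p hp => ⟨0, ?_, ?_⟩⟩
    · haveI : IsEmpty ↥(perSet (⇑T) p) := ⟨fun x => IsEmpty.false x.1⟩
      have hcont : Continuous (fun x : ↥(perSet (⇑T) p) => (isEmptyElim x : ↥(EnSpace p 0))) :=
        ⟨fun u _ => by rw [Set.eq_empty_of_isEmpty (_ ⁻¹' u)]; exact isOpen_empty⟩
      have h0 : zpIndex p (perSet (⇑T) p) (perMap (⇑T) p) ≤ ((0:ℕ) : ℕ∞) := by
        apply sInf_le
        exact ⟨0, fun x => isEmptyElim x, rfl, hcont, fun x => isEmptyElim x⟩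
      have := le_antisymm (by simpa using h0) (zero_le (a := zpIndex p (perSet (⇑T) p) (perMap (⇑T) p)))
      simpa using this
    · have hp0 : (0:ℝ) < p := by exact_mod_cast hp.pos
      push_cast
      linarith
  · letI : MetricSpace X := TopologicalSpace.metrizableSpaceMetric X
    obtain ⟨x₀⟩ := hX
    have hTc : Continuous (⇑T) := T.continuous
    have hdc : Continuous fun x : X => dist x (T x) := continuous_id.dist hTc
    obtain ⟨xm, -, hxm⟩ := isCompact_univ.exists_isMinOn ⟨x₀, Set.mem_univ x₀⟩ hdc.continuousOn
    set δ := dist xm (T xm) with hδdef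
    have hδpos : 0 < δ := dist_pos.mpr (Ne.symm (hT xm))
    have hδle : ∀ y : X, δ ≤ dist y (T y) := fun y => isMinOn_iff.mp hxm y (Set.mem_univ y)
    obtain ⟨s, hs⟩ := isCompact_univ.elim_finite_subcover (fun c : X => Metric.ball c (δ/3))
      (fun c => Metric.isOpen_ball)
      (fun y _ => Set.mem_iUnion.mpr ⟨y, Metric.mem_ball_self (by positivity)⟩)
    have hcover : ∀ y : X, ∃ c ∈ s, dist y c < δ/3 := by
      intro y
      have := hs (Set.mem_univ y)
      simp only [Set.mem_iUnion, Metric.mem_ball, exists_prop] at this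
      exact this
    have hsne : 0 < s.card := by
      obtain ⟨c, hc, -⟩ := hcover x₀
      exact Finset.card_pos.mpr ⟨c, hc⟩
    refine ⟨(2*s.card+1 : ℝ), by positivity, fun p hp => ?_⟩
    haveI : Fact p.Prime := ⟨hp⟩
    haveI : NeZero p := ⟨hp.ne_zero⟩
    have hp2 : 2 ≤ p := hp.two_le
    set n : ℕ := s.card * ((p-1) * 2) - 1 with hn
    have hpos : 0 < s.card * ((p-1)*2) := Nat.mul_pos hsne (by omega)
    have hn1 : n + 1 = s.card * ((p-1)*2) := Nat.succ_pred_eq_of_pos hpos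
    have hcard : Fintype.card ({c // c ∈ s} × Fin (p-1) × Fin 2) = n + 1 := by
      simp [Fintype.card_coe, hn1]
    let ε : Fin (n+1) ≃ {c // c ∈ s} × Fin (p-1) × Fin 2 := (Fintype.equivFinOfCardEq hcard).symm
    -- positivity of the normalizing sum
    have hSigPos : ∀ x : ↥(perSet (⇑T) p), 0 < SigF (⇑T) p δ s x.1 := by
      intro x
      obtain ⟨c₀, hc₀s, hc₀⟩ := hcover x.1
      have hxper : (⇑T)^[p] x.1 = x.1 := x.2
      have hz : ∃ κ, 1 ≤ κ ∧ κ ≤ p-1 ∧ zcf (⇑T) p δ c₀ κ x.1 ≠ 0 := by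
        by_contra hcon
        push_neg at hcon
        exact nonvanish (⇑T) p hp2 δ hδpos x.1 (hδle x.1) c₀ hc₀ hxper hcon
      obtain ⟨κ, hκ1, hκ2, hzne⟩ := hz
      obtain ⟨t, ht⟩ := exists_arc p hp2 _ hzne
      have hs2 : (0:ℤ) ≤ t % 2 := Int.emod_nonneg t (by norm_num)
      have hs2' : t % 2 < 2 := Int.emod_lt_of_pos t (by norm_num)
      have hκz : ((κ : ℕ) : ZMod p) ≠ 0 := by
        intro h
        rw [ZMod.natCast_eq_zero_iff] at h
        have := Nat.le_of_dvd (by omega) h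
        omega
      set sv : Fin 2 := ⟨(t % 2).toNat, by omega⟩ with hsv
      set g₀ : ZMod p := ((κ:ℕ) : ZMod p)⁻¹ * ((t/2 : ℤ) : ZMod p) with hg₀
      have hts : (sv.val : ℤ) = t % 2 := by
        rw [hsv]
        exact Int.toNat_of_nonneg hs2
      have hEeq : cexpE p (-(2 * (κ:ℤ) * ((g₀.val : ℕ):ℤ) + ((sv.val:ℕ):ℤ))) = cexpE p (-t) := by
        rw [show (-(2 * (κ:ℤ) * ((g₀.val : ℕ):ℤ) + ((sv.val:ℕ):ℤ)))
            = 2*(-((κ:ℤ)*((g₀.val:ℕ):ℤ))) + (-((sv.val:ℕ):ℤ)) by ring,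
          show (-t) = 2*(-(t/2)) + (-((sv.val:ℕ):ℤ)) by rw [hts]; omega,
          cexpE_add, cexpE_add]
        congr 1
        apply cexpE_congr p (NeZero.ne p)
        push_cast
        rw [ZMod.natCast_val, ZMod.cast_id, hg₀, mul_inv_cancel_left₀ hκz]
      set i₀ : {c // c ∈ s} × Fin (p-1) × Fin 2 := (⟨c₀, hc₀s⟩, ⟨κ-1, by omega⟩, sv) with hi₀
      have hΦpos : 0 < PhiF (⇑T) p δ i₀ x.1 g₀ := by
        have hκval : (κ - 1) + 1 = κ := by omega
        show 0 < Fcf (⇑T) p δ c₀ ((κ-1)+1) sv.val x.1 g₀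
        rw [hκval, Fcf, hEeq]
        exact lt_max_iff.mpr (Or.inr (by linarith [ht]))
      have h1 : PhiF (⇑T) p δ i₀ x.1 g₀ ≤ ∑ g : ZMod p, PhiF (⇑T) p δ i₀ x.1 g :=
        Finset.single_le_sum (fun g _ => PhiF_nonneg (⇑T) p δ i₀ x.1 g) (Finset.mem_univ g₀)
      have h2 : (∑ g : ZMod p, PhiF (⇑T) p δ i₀ x.1 g) ≤ SigF (⇑T) p δ s x.1 :=
        Finset.single_le_sum (fun i _ => Finset.sum_nonneg fun g _ => PhiF_nonneg (⇑T) p δ i x.1 g)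
          (Finset.mem_univ i₀)
      linarith
    -- the equivariant map
    have hκne' : ∀ k : Fin (p-1), (((k.val+1 : ℕ)) : ZMod p) ≠ 0 := by
      intro k h
      rw [ZMod.natCast_eq_zero_iff] at h
      have hk := k.isLt
      have := Nat.le_of_dvd (by omega) h
      omega
    have hunique : ∀ (x : ↥(perSet (⇑T) p)) (i : {c // c ∈ s} × Fin (p-1) × Fin 2) (g h : ZMod p),
        0 < PhiF (⇑T) p δ i x.1 g → 0 < PhiF (⇑T) p δ i x.1 h → g = h := by
      intro x i g h hg hh
      have hg' := (lt_max_iff.mp hg).resolve_left (lt_irrefl 0)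
      have hh' := (lt_max_iff.mp hh).resolve_left (lt_irrefl 0)
      have hdvd := unique_core p hp2 (zcf (⇑T) p δ i.1.1 (i.2.1.val+1) x.1)
        (((i.2.1.val+1 : ℕ) : ℤ) * (((g.val:ℕ):ℤ) - ((h.val:ℕ):ℤ)))
        (2 * ((i.2.1.val+1 : ℕ):ℤ) * ((g.val:ℕ):ℤ) + ((i.2.2.val:ℕ):ℤ))
        (2 * ((i.2.1.val+1 : ℕ):ℤ) * ((h.val:ℕ):ℤ) + ((i.2.2.val:ℕ):ℤ))
        (by ring) (by linarith [hg']) (by linarith [hh'])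
      have h0 : ((((i.2.1.val+1 : ℕ) : ℤ) * (((g.val:ℕ):ℤ) - ((h.val:ℕ):ℤ)) : ℤ) : ZMod p) = 0 :=
        (ZMod.intCast_zmod_eq_zero_iff_dvd _ p).mpr hdvd
      push_cast at h0
      rw [ZMod.natCast_val, ZMod.natCast_val, ZMod.cast_id, ZMod.cast_id] at h0
      rcases mul_eq_zero.mp h0 with h' | h'
      · exfalso
        apply hκne' i.2.1
        push_cast
        exact h'
      · exact sub_eq_zero.mp h'
    have hmem : ((n:ℕ) : ℕ∞) ∈ {k : ℕ∞ | ∃ (m : ℕ) (φ : ↥(perSet (⇑T) p) → ↥(EnSpace p m)),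
        k = (m : ℕ∞) ∧ Continuous φ ∧
        ∀ x, (φ (perMap (⇑T) p x) : Fin (m+1) × ZMod p → ℝ)
          = enShift p m ((φ x : Fin (m+1) × ZMod p → ℝ))} := by
      refine ⟨n, fun x => ⟨fun a => PhiF (⇑T) p δ (ε a.1) x.1 a.2 / SigF (⇑T) p δ s x.1, ?_, ?_, ?_⟩,
        rfl, ?_, ?_⟩
      · intro a
        exact div_nonneg (PhiF_nonneg _ _ _ _ _ _) (hSigPos x).le
      · rw [finsum_eq_sum_of_fintype, ← Finset.sum_div, Fintype.sum_prod_type,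
          Equiv.sum_comp ε (fun i => ∑ g : ZMod p, PhiF (⇑T) p δ i x.1 g)]
        exact div_self (ne_of_gt (hSigPos x))
      · intro i g h hg hh
        have hS := hSigPos x
        have hg' : 0 < PhiF (⇑T) p δ (ε i) x.1 g := by
          have := mul_pos hg hS
          rwa [div_mul_cancel₀ _ (ne_of_gt hS)] at this
        have hh' : 0 < PhiF (⇑T) p δ (ε i) x.1 h := by
          have := mul_pos hh hS
          rwa [div_mul_cancel₀ _ (ne_of_gt hS)] at this
        exact hunique x (ε i) g h hg' hh'
      · apply Continuous.subtype_mk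
        apply continuous_pi
        intro a
        exact ((PhiF_cont hTc p δ (ε a.1) a.2).comp continuous_subtype_val).div
          ((SigF_cont hTc p δ s).comp continuous_subtype_val) (fun x => ne_of_gt (hSigPos x))
      · intro x
        funext a
        show PhiF (⇑T) p δ (ε a.1) (⇑T x.1) a.2 / SigF (⇑T) p δ s (⇑T x.1)
          = enShift p n _ a
        rw [PhiF_shift (⇑T) p hp2 δ (ε a.1) x.1 x.2 a.2, SigF_shift (⇑T) p hp2 δ s x.1 x.2]
        rfl
    have hle : zpIndex p (perSet (⇑T) p) (perMap (⇑T) p) ≤ ((n:ℕ) : ℕ∞) := sInf_le hmem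
    have hlt : zpIndex p (perSet (⇑T) p) (perMap (⇑T) p) < ⊤ :=
      lt_of_le_of_lt hle (WithTop.coe_lt_top n)
    set k : ℕ := (zpIndex p (perSet (⇑T) p) (perMap (⇑T) p)).toNat with hkdef
    have hk : (k : ℕ∞) = zpIndex p (perSet (⇑T) p) (perMap (⇑T) p) := ENat.coe_toNat hlt.ne
    refine ⟨k, hk.symm, ?_⟩
    have hkn : k ≤ n := by
      rw [← hk] at hle
      exact_mod_cast hle
    have hnat : k < (2*s.card+1)*p := by
      have h1 : n + 1 ≤ 2*s.card*p := by
        rw [hn1]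
        calc s.card * ((p-1)*2) = 2*s.card*(p-1) := by ring
          _ ≤ 2*s.card*p := Nat.mul_le_mul_left _ (by omega)
      have hp0 := hp.pos
      calc k ≤ n := hkn
        _ < n + 1 := Nat.lt_succ_self n
        _ ≤ 2*s.card*p := h1
        _ < 2*s.card*p + p := by omega
        _ = (2*s.card+1)*p := by ring
    calc (k:ℝ) < (((2*s.card+1)*p : ℕ) : ℝ) := by exact_mod_cast hnat
      _ = (2*s.card+1 : ℝ) * p := by push_cast; ring
end

section
/- Let (X, T) be a compact dynamical system with the marker property. Then there exists an equivariant continuous map f : X → 𝒴, where 𝒴 = {(x_n)_{n∈ℤ} ∈ (ℝ/2ℤ)^ℤ : max(ρ(x_n, x_{n+1}), ρ(x_{n+1}, x_{n+2})) = 1 for all n} with the shift action, and ρ is the quotient metric ρ(x,y) = min_{n∈ℤ} |x − y − 2n| on ℝ/2ℤ. -/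
lemma addCircle_norm_le (z : ℝ) : ‖(z : AddCircle (2:ℝ))‖ ≤ 1 := by
  rw [AddCircle.norm_eq' (2:ℝ) (by norm_num)]
  have := abs_sub_round ((2:ℝ)⁻¹ * z)
  linarith

lemma addCircle_dist_le (a b : AddCircle (2:ℝ)) : dist a b ≤ 1 := by
  rw [dist_eq_norm]
  induction (a - b) using QuotientAddGroup.induction_on with
  | H z => exact addCircle_norm_le z

lemma addCircle_dist_add_one (a : AddCircle (2:ℝ)) :
    dist a (a + ((1:ℝ) : AddCircle (2:ℝ))) = 1 := by
  rw [dist_eq_norm]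
  have h : a - (a + ((1:ℝ) : AddCircle (2:ℝ))) = -((1:ℝ) : AddCircle (2:ℝ)) := by abel
  rw [h, norm_neg, AddCircle.norm_eq]
  norm_num [round_eq]

lemma iter_cancel {X : Type*} (f g : X → X) (hfg : ∀ z, f (g z) = z) :
    ∀ (n m : ℕ), n ≤ m → ∀ z, f^[n] (g^[m] z) = g^[m-n] z := by
  intro n
  induction n with
  | zero => intro m _ z; simp
  | succ n ih =>
    intro m hm z
    obtain ⟨m', rfl⟩ : ∃ m', m = m' + 1 := ⟨m - 1, by omega⟩
    rw [Function.iterate_succ_apply]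
    have h1 : f (g^[m'+1] z) = g^[m'] z := by
      rw [Function.iterate_succ_apply', hfg]
    rw [h1, ih m' (by omega) z]
    congr 1
    omega

lemma perm_zpow_succ {X : Type*} [TopologicalSpace X] (T : X ≃ₜ X) (n : ℤ) (x : X) :
    (T.toEquiv ^ (n + 1)) x = T ((T.toEquiv ^ n) x) := by
  rw [add_comm, zpow_add, zpow_one]
  rfl

lemma perm_zpow_succ' {X : Type*} [TopologicalSpace X] (T : X ≃ₜ X) (n : ℤ) (x : X) :
    (T.toEquiv ^ (n + 1)) x = (T.toEquiv ^ n) (T x) := by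
  rw [zpow_add, zpow_one]
  rfl

lemma perm_zpow_pred {X : Type*} [TopologicalSpace X] (T : X ≃ₜ X) (n : ℤ) (x : X) :
    (T.toEquiv ^ (n - 1)) x = (T.toEquiv ^ n) (T.symm x) := by
  rw [zpow_sub, zpow_one]
  rfl

lemma perm_zpow_continuous {X : Type*} [TopologicalSpace X] (T : X ≃ₜ X) (n : ℤ) :
    Continuous fun x => (T.toEquiv ^ n) x := by
  induction n using Int.induction_on with
  | zero => simpa using (continuous_id' : Continuous fun x : X => x)
  | succ n ih =>
    have : (fun x => (T.toEquiv ^ ((n : ℤ) + 1)) x) =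
        (fun x => (T.toEquiv ^ (n : ℤ)) x) ∘ ⇑T := by
      funext x; exact perm_zpow_succ' T n x
    rw [this]; exact ih.comp T.continuous
  | pred n ih =>
    have : (fun x => (T.toEquiv ^ (-(n : ℤ) - 1)) x) =
        (fun x => (T.toEquiv ^ (-(n : ℤ))) x) ∘ ⇑T.symm := by
      funext x; exact perm_zpow_pred T (-n) x
    rw [this]; exact ih.comp T.symm.continuous


/-- The subsystem `𝒴 ⊂ (ℝ/2ℤ)^ℤ`: sequences such that among any two consecutive steps,
one has distance exactly `1` (the diameter of `ℝ/2ℤ`). -/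
def Yspace : Set (ℤ → AddCircle (2:ℝ)) :=
  {x | ∀ n : ℤ, max (dist (x n) (x (n + 1))) (dist (x (n + 1)) (x (n + 2))) = 1}

/-- The subsystem `𝒵 ⊂ (ℝ/2ℤ)^ℤ`: sequences such that among any two consecutive steps,
one has distance at least `1/2`. -/
def Zspace : Set (ℤ → AddCircle (2:ℝ)) :=
  {x | ∀ n : ℤ, (1:ℝ)/2 ≤ max (dist (x n) (x (n + 1))) (dist (x (n + 1)) (x (n + 2)))}

/-- **Marker property gives a map to 𝒴.** If a compact metrizable dynamical system
`(X, T)` has the marker property, then there is an equivariant continuous map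
`f : X → 𝒴 ⊂ (ℝ/2ℤ)^ℤ`. -/
theorem equivariant_map_to_Y_of_marker (X : Type*) [TopologicalSpace X] [CompactSpace X]
    [TopologicalSpace.MetrizableSpace X] (T : X ≃ₜ X)
    (marker : ∀ N : ℕ, ∃ U : Set X, IsOpen U ∧
      (∀ n : ℕ, 1 ≤ n → n ≤ N → U ∩ (⇑T)^[n] ⁻¹' U = ∅) ∧
      ((⋃ n : ℕ, (⇑T)^[n] ⁻¹' U) ∪ (⋃ n : ℕ, (⇑T.symm)^[n] ⁻¹' U)) = Set.univ) :
    ∃ f : X → (ℤ → AddCircle (2:ℝ)), Continuous f ∧ (∀ x : X, f x ∈ Yspace) ∧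
      ∀ x : X, f (T x) = fun n => f x (n + 1) := by
    classical
  rcases isEmpty_or_nonempty X with hX | hX
  · exact ⟨fun _ _ => 0, continuous_const, fun x => isEmptyElim x, fun x => isEmptyElim x⟩
  obtain ⟨x₀⟩ := hX
  letI : MetricSpace X := TopologicalSpace.metrizableSpaceMetric X
  obtain ⟨U, hUopen, hUdisj, hUcover⟩ := marker 1
  -- basic disjointness
  have hdisj : ∀ y : X, y ∈ U → T y ∉ U := by
    intro y hy hTy
    have hmem : y ∈ U ∩ (⇑T)^[1] ⁻¹' U := ⟨hy, by simpa using hTy⟩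
    rw [hUdisj 1 le_rfl le_rfl] at hmem
    exact hmem
  have hUc : Uᶜ.Nonempty := by
    refine Set.nonempty_compl.2 (fun h => hdisj x₀ ?_ ?_) <;> simp [h]
  -- the distance function to the complement
  set d : X → ℝ := fun x => Metric.infDist x Uᶜ with hd_def
  have hd_cont : Continuous d := Metric.continuous_infDist_pt _
  have hd_pos : ∀ {y : X}, y ∈ U → 0 < d y := by
    intro y hy
    exact (hUopen.isClosed_compl.notMem_iff_infDist_pos hUc).1 (by simpa using hy)
  -- finite subcover and window bound M
  have hWopen : ∀ n : ℕ, IsOpen ((⇑T)^[n] ⁻¹' U ∪ (⇑T.symm)^[n] ⁻¹' U) := fun n =>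
    ((hUopen.preimage (T.continuous.iterate n)).union
      (hUopen.preimage (T.symm.continuous.iterate n)))
  obtain ⟨t, ht⟩ := isCompact_univ.elim_finite_subcover
      (fun n : ℕ => (⇑T)^[n] ⁻¹' U ∪ (⇑T.symm)^[n] ⁻¹' U) hWopen
      (by rw [← Set.iUnion_union_distrib] at hUcover; exact hUcover.symm.subset)
  set M : ℕ := t.sup id with hM_def
  have hM : ∀ x : X, ∃ n ≤ M, (⇑T)^[n] x ∈ U ∨ (⇑T.symm)^[n] x ∈ U := by
    intro x
    obtain ⟨n, hnt, hn⟩ := Set.mem_iUnion₂.1 (ht (Set.mem_univ x))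
    exact ⟨n, Finset.le_sup (f := id) hnt, hn⟩
  -- window property: every orbit point sees U within 2M backward steps
  have hwin : ∀ z : X, ∃ j ≤ 2*M, (⇑T.symm)^[j] z ∈ U := by
    intro z
    obtain ⟨n, hnM, h | h⟩ := hM ((⇑T.symm)^[M] z)
    · exact ⟨M - n, by omega, by rwa [iter_cancel (⇑T) (⇑T.symm) T.apply_symm_apply n M hnM] at h⟩
    · exact ⟨n + M, by omega, by rwa [← Function.iterate_add_apply] at h⟩
  -- a uniform positive lower bound
  set F : X → ℝ := fun z => ∑ j ∈ Finset.range (2*M+1), d ((⇑T.symm)^[j] z) with hF_def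
  have hFcont : Continuous F :=
    continuous_finset_sum _ fun j _ => hd_cont.comp (T.symm.continuous.iterate j)
  have hFpos : ∀ z, 0 < F z := by
    intro z
    obtain ⟨j, hj, hjU⟩ := hwin z
    exact Finset.sum_pos' (fun i _ => Metric.infDist_nonneg)
      ⟨j, Finset.mem_range.2 (by omega), hd_pos hjU⟩
  obtain ⟨xm, -, hxm⟩ := isCompact_univ.exists_isMinOn ⟨x₀, Set.mem_univ x₀⟩ hFcont.continuousOn
  set ε : ℝ := F xm / (2*M+1) with hε_def
  have hε : 0 < ε := div_pos (hFpos xm) (by positivity)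
  have hεwin : ∀ z : X, ∃ j ∈ Finset.range (2*M+1), ε ≤ d ((⇑T.symm)^[j] z) := by
    intro z
    refine Finset.exists_le_of_sum_le ⟨0, Finset.mem_range.2 (by omega)⟩ ?_
    rw [Finset.sum_const, Finset.card_range, nsmul_eq_mul]
    have h1 : F xm ≤ F z := hxm (Set.mem_univ z)
    have h2 : ((2*M+1 : ℕ) : ℝ) * ε = F xm := by
      rw [hε_def]; field_simp; push_cast; ring
    rw [h2]
    exact h1
  -- the bump function
  set ψ : X → ℝ := fun x => min 1 (d x / ε) with hψ_def
  have hψcont : Continuous ψ := continuous_const.min (hd_cont.div_const ε)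
  have hψ_memU : ∀ {y : X}, ψ y ≠ 0 → y ∈ U := by
    intro y h
    by_contra hy
    apply h
    simp [hψ_def, Metric.infDist_zero_of_mem (show y ∈ Uᶜ from hy), hd_def]
  have hψ_one : ∀ {y : X}, ε ≤ d y → ψ y = 1 := fun h => min_eq_left ((one_le_div hε).2 h)
  -- the real-valued "time since marker" function
  set b : ℕ → X → ℝ := fun k x => ∏ j ∈ Finset.range k, (1 - ψ ((⇑T.symm)^[j] x)) with hb_def
  set φ : X → ℝ := fun x => ∑ k ∈ Finset.range (2*M+1), b (k+1) x with hφ_def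
  have hφcont : Continuous φ :=
    continuous_finset_sum _ fun k _ => continuous_finset_prod _ fun j _ =>
      continuous_const.sub (hψcont.comp (T.symm.continuous.iterate j))
  have hb_step : ∀ (k : ℕ) (x : X), ψ (T x) = 0 → b (k+1) (T x) = b k x := by
    intro k x hx
    rw [hb_def]
    simp only
    rw [Finset.prod_range_succ']
    have h0 : (⇑T.symm)^[0] (T x) = T x := rfl
    rw [h0, hx, sub_zero, mul_one]
    exact Finset.prod_congr rfl fun j _ => by
      rw [Function.iterate_succ_apply, T.symm_apply_apply]
  have hbK : ∀ x : X, ψ (T x) = 0 → b (2*M+1) x = 0 := by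
    intro x hx
    obtain ⟨i, hi, hiU⟩ := hεwin (T x)
    match i, hi with
    | 0, hi =>
      rw [Function.iterate_zero_apply] at hiU
      exact absurd ((hψ_one hiU).symm.trans hx) one_ne_zero
    | (j+1), hi =>
      have hj : (⇑T.symm)^[j+1] (T x) = (⇑T.symm)^[j] x := by
        rw [Function.iterate_succ_apply, T.symm_apply_apply]
      rw [hj] at hiU
      refine Finset.prod_eq_zero (Finset.mem_range.2 ?_) (by rw [hψ_one hiU]; ring)
      have := Finset.mem_range.1 hi
      omega
  have hφ_step : ∀ x : X, ψ (T x) = 0 → φ (T x) = φ x + 1 := by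
    intro x hx
    have h1 : φ (T x) = ∑ k ∈ Finset.range (2*M+1), b k x :=
      Finset.sum_congr rfl fun k _ => hb_step k x hx
    have h2 : φ x = ∑ k ∈ Finset.range (2*M), b (k+1) x + b (2*M+1) x := by
      rw [hφ_def]; exact Finset.sum_range_succ _ _
    have h3 : b 0 x = 1 := by simp [hb_def]
    rw [h1, Finset.sum_range_succ', h2, hbK x hx, h3]
    ring
  -- the circle-valued function
  set g : X → AddCircle (2:ℝ) := fun x => ((φ x : ℝ) : AddCircle (2:ℝ)) with hg_def
  have hgcont : Continuous g := (AddCircle.continuous_mk' 2).comp hφcont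
  have hg_step : ∀ x : X, ψ (T x) = 0 → g (T x) = g x + ((1:ℝ) : AddCircle (2:ℝ)) := by
    intro x hx
    rw [hg_def]
    simp only
    rw [hφ_step x hx, AddCircle.coe_add]
  have key : ∀ y : X, max (dist (g y) (g (T y))) (dist (g (T y)) (g (T (T y)))) = 1 := by
    intro y
    by_cases h : ψ (T y) = 0
    · rw [hg_step y h, addCircle_dist_add_one]
      exact max_eq_left (addCircle_dist_le _ _)
    · have hTy : T y ∈ U := hψ_memU h
      have h2 : ψ (T (T y)) = 0 := by
        by_contra h2
        exact hdisj (T y) hTy (hψ_memU h2)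
      rw [hg_step (T y) h2, addCircle_dist_add_one]
      exact max_eq_right (addCircle_dist_le _ _)
  -- assemble f
  refine ⟨fun x n => g ((T.toEquiv ^ n) x), ?_, ?_, ?_⟩
  · exact continuous_pi fun n => hgcont.comp (perm_zpow_continuous T n)
  · intro x n
    show max (dist (g ((T.toEquiv ^ n) x)) (g ((T.toEquiv ^ (n+1)) x)))
      (dist (g ((T.toEquiv ^ (n+1)) x)) (g ((T.toEquiv ^ (n+2)) x))) = 1
    have h1 : (T.toEquiv ^ (n+1)) x = T ((T.toEquiv ^ n) x) := perm_zpow_succ T n x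
    have h2 : (T.toEquiv ^ (n+2)) x = T (T ((T.toEquiv ^ n) x)) := by
      rw [show n+2 = (n+1)+1 by ring, perm_zpow_succ T (n+1) x, h1]
    rw [h1, h2]
    exact key ((T.toEquiv ^ n) x)
  · intro x
    funext n
    show g ((T.toEquiv ^ n) (T x)) = g ((T.toEquiv ^ (n+1)) x)
    rw [perm_zpow_succ' T n x]
end

section
/- Let (X_m, T_m), m ∈ ℕ, be compact dynamical systems and suppose there is an equivariant continuous map f : ∏_{m=1}^∞ X_m → 𝒴. Then there exist M ∈ ℕ and an equivariant continuous map g : X_1 × ⋯ × X_M → 𝒵, where 𝒴 = {(x_n) ∈ (ℝ/2ℤ)^ℤ : max(ρ(x_n,x_{n+1}), ρ(x_{n+1},x_{n+2})) = 1 ∀n} and 𝒵 = {(x_n) ∈ (ℝ/2ℤ)^ℤ : max(ρ(x_n,x_{n+1}), ρ(x_{n+1},x_{n+2})) ≥ 1/2 ∀n}, both with the shift. -/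
open Filter Set
open scoped Uniformity

instance homeoGroup {α : Type*} [TopologicalSpace α] : Group (α ≃ₜ α) where
  mul f g := g.trans f
  one := Homeomorph.refl α
  inv := Homeomorph.symm
  mul_assoc _ _ _ := Homeomorph.ext fun _ => rfl
  one_mul _ := Homeomorph.ext fun _ => rfl
  mul_one _ := Homeomorph.ext fun _ => rfl
  inv_mul_cancel f := Homeomorph.ext fun x => f.symm_apply_apply x

@[simp] lemma homeo_mul_apply {α : Type*} [TopologicalSpace α] (f g : α ≃ₜ α) (x : α) :
    (f * g) x = f (g x) := rfl

lemma key_lemma (X : ℕ → Type*) [∀ m, TopologicalSpace (X m)]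
    [∀ m, CompactSpace (X m)] [∀ m, TopologicalSpace.MetrizableSpace (X m)]
    (f : (∀ m, X m) → (ℤ → AddCircle (2:ℝ))) (hf : Continuous f) :
    ∃ M : ℕ, ∀ a b : ∀ m, X m, (∀ m, m < M → a m = b m) → dist (f a 0) (f b 0) < 1/4 := by
  letI : ∀ m, MetricSpace (X m) := fun m => TopologicalSpace.metrizableSpaceMetric (X m)
  have hUC : UniformContinuous (fun x : ∀ m, X m => f x 0) :=
    CompactSpace.uniformContinuous_of_continuous ((continuous_apply (0:ℤ)).comp hf)
  have hU : {q : (∀ m, X m) × (∀ m, X m) | dist (f q.1 0) (f q.2 0) < 1/4} ∈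
      𝓤 (∀ m, X m) := hUC (Metric.dist_mem_uniformity (by norm_num))
  rw [Pi.uniformity] at hU
  obtain ⟨I, hIfin, V, hV, hVuniv, -, hUV⟩ := Filter.mem_iInf'.mp hU
  obtain ⟨B, hB⟩ := hIfin.bddAbove
  refine ⟨B + 1, fun a b hab => ?_⟩
  have : (a, b) ∈ ⋂ i, V i := by
    refine Set.mem_iInter.2 fun i => ?_
    by_cases hi : i ∈ I
    · obtain ⟨W, hW, hsub⟩ := Filter.mem_comap.mp (hV i)
      apply hsub
      have : a i = b i := hab i (Nat.lt_succ_of_le (hB hi))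
      simpa [this] using refl_mem_uniformity hW
    · simp [hVuniv i hi]
  rw [← hUV] at this
  exact this

theorem finite_product_map_to_Z' (X : ℕ → Type*) [∀ m, TopologicalSpace (X m)]
    [∀ m, CompactSpace (X m)] [∀ m, TopologicalSpace.MetrizableSpace (X m)]
    (T : ∀ m, X m ≃ₜ X m)
    (f : (∀ m, X m) → (ℤ → AddCircle (2:ℝ))) (hf : Continuous f)
    (hfY : ∀ x, ∀ n : ℤ,
      max (dist (f x n) (f x (n + 1))) (dist (f x (n + 1)) (f x (n + 2))) = 1)
    (hequiv : ∀ x : ∀ m, X m, f (fun m => T m (x m)) = fun n => f x (n + 1)) :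
    ∃ (M : ℕ) (g : (∀ m : Fin M, X m) → (ℤ → AddCircle (2:ℝ))),
      Continuous g ∧ (∀ x, ∀ n : ℤ,
        (1:ℝ)/2 ≤ max (dist (g x n) (g x (n + 1))) (dist (g x (n + 1)) (g x (n + 2)))) ∧
      ∀ x : ∀ m : Fin M, X m, g (fun m => T m (x m)) = fun n => g x (n + 1) := by
  by_cases hne : ∀ m, Nonempty (X m)
  case neg =>
    push_neg at hne
    obtain ⟨m, hm⟩ := hne
    refine ⟨m + 1, fun _ _ => 0, continuous_const, ?_, ?_⟩
    · exact fun x => absurd ⟨x ⟨m, Nat.lt_succ_self m⟩⟩ (not_nonempty_iff.mpr hm)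
    · exact fun x => absurd ⟨x ⟨m, Nat.lt_succ_self m⟩⟩ (not_nonempty_iff.mpr hm)
  case pos =>
  obtain ⟨M, hM⟩ := key_lemma X f hf
  set p : ∀ m, X m := fun m => (hne m).some with hp
  set S : (∀ m : Fin M, X m) ≃ₜ (∀ m : Fin M, X m) :=
    Homeomorph.piCongrRight (fun m : Fin M => T m) with hS
  set E : (∀ m : Fin M, X m) → (∀ m, X m) :=
    fun x m => if h : m < M then x ⟨m, h⟩ else p m with hE
  have hEcont : Continuous E := by
    refine continuous_pi fun m => ?_
    by_cases h : m < M
    · simpa [hE, h] using (continuous_apply (⟨m, h⟩ : Fin M))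
    · simpa [hE, h] using continuous_const
  -- the full shift on the infinite product
  set Sf : (∀ m, X m) → (∀ m, X m) := fun z m => T m (z m) with hSf
  have hstep : ∀ z : ∀ m, X m, ∀ k : ℤ, f (Sf z) k = f z (k + 1) := by
    intro z k
    have := congrFun (hequiv z) k
    simpa [hSf] using this
  -- agreement of Sf with E ∘ S on low coordinates
  have hagree : ∀ (x : ∀ m : Fin M, X m) (m : ℕ) (h : m < M),
      Sf (E x) m = E (S x) m := by
    intro x m h
    simp [hSf, hE, h, hS, Homeomorph.piCongrRight]
  refine ⟨M, fun x n => f (E ((S ^ n) x)) 0, ?_, ?_, ?_⟩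
  · refine continuous_pi fun n => ?_
    exact (continuous_apply (0:ℤ)).comp (hf.comp (hEcont.comp (S ^ n).continuous))
  · intro x n
    set y : ∀ m, X m := E ((S ^ n) x) with hy
    have h1 : dist (f y 1) (f (E ((S ^ (n+1)) x)) 0) < 1/4 := by
      have := hM (Sf y) (E ((S ^ (n+1)) x)) ?_
      · rwa [hstep y 0, zero_add] at this
      · intro m h
        rw [hagree ((S ^ n) x) m h]
        have hz : S ((S ^ n) x) = (S ^ (n+1)) x := by
          rw [show n + 1 = 1 + n by ring, zpow_one_add, homeo_mul_apply]
        rw [hz]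
    have h2 : dist (f y 2) (f (E ((S ^ (n+2)) x)) 0) < 1/4 := by
      have := hM (Sf (Sf y)) (E ((S ^ (n+2)) x)) ?_
      · rwa [hstep (Sf y) 0, hstep y (0+1), zero_add, show (1:ℤ)+1 = 2 by ring] at this
      · intro m h
        have e1 : Sf (Sf y) m = T m (Sf y m) := rfl
        rw [e1, hagree ((S ^ n) x) m h]
        have e2 : T m (E (S ((S ^ n) x)) m) = Sf (E (S ((S^n) x))) m := rfl
        rw [e2, hagree (S ((S ^ n) x)) m h]
        have hz : S (S ((S ^ n) x)) = (S ^ (n+2)) x := by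
          rw [show n + 2 = 1 + (1 + n) by ring, zpow_one_add, zpow_one_add, homeo_mul_apply,
            homeo_mul_apply]
        rw [hz]
    have hyY := hfY y 0
    rw [show (0:ℤ)+1 = 1 by ring, show (0:ℤ)+2 = 2 by ring] at hyY
    show (1:ℝ)/2 ≤ max (dist (f (E ((S ^ n) x)) 0) (f (E ((S ^ (n+1)) x)) 0))
      (dist (f (E ((S ^ (n+1)) x)) 0) (f (E ((S ^ (n+2)) x)) 0))
    rw [← hy]
    rcases le_max_iff.mp hyY.ge with hc | hc
    · refine le_max_of_le_left ?_
      have ht := dist_triangle (f y 0) (f (E ((S ^ (n+1)) x)) 0) (f y 1)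
      have : dist (f (E ((S ^ (n + 1)) x)) 0) (f y 1) < 1/4 := by
        rwa [dist_comm]
      linarith
    · refine le_max_of_le_right ?_
      have t1 := dist_triangle (f y 1) (f (E ((S ^ (n+1)) x)) 0) (f y 2)
      have t2 := dist_triangle (f (E ((S ^ (n+1)) x)) 0) (f (E ((S ^ (n+2)) x)) 0) (f y 2)
      have h2' : dist (f (E ((S ^ (n + 2)) x)) 0) (f y 2) < 1/4 := by rwa [dist_comm]
      linarith
  · intro x
    funext n
    show f (E ((S ^ n) (S x))) 0 = f (E ((S ^ (n+1)) x)) 0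
    have hz : (S ^ n) (S x) = (S ^ (n+1)) x := by
      rw [zpow_add_one, homeo_mul_apply]
    rw [hz]

/-- **From an infinite product to a finite product.** If a countable product of compact
dynamical systems admits an equivariant continuous map to `𝒴`, then some finite
subproduct admits an equivariant continuous map to `𝒵`. -/
theorem finite_product_map_to_Z (X : ℕ → Type*) [∀ m, TopologicalSpace (X m)]
    [∀ m, CompactSpace (X m)] [∀ m, TopologicalSpace.MetrizableSpace (X m)]
    (T : ∀ m, X m ≃ₜ X m)
    (f : (∀ m, X m) → (ℤ → AddCircle (2:ℝ))) (hf : Continuous f)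
    (hfY : ∀ x, f x ∈ Yspace)
    (hequiv : ∀ x : ∀ m, X m, f (fun m => T m (x m)) = fun n => f x (n + 1)) :
    ∃ (M : ℕ) (g : (∀ m : Fin M, X m) → (ℤ → AddCircle (2:ℝ))),
      Continuous g ∧ (∀ x, g x ∈ Zspace) ∧
      ∀ x : ∀ m : Fin M, X m, g (fun m => T m (x m)) = fun n => g x (n + 1) := by
  exact finite_product_map_to_Z' X T f hf hfY hequiv
end
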